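/- arXiv:1505.02745 — 7 statements merged into one kernel-verified Lean document; each statement's English description precedes it below -/
import Mathlib

section
/- Let p, q, t be positive integers such that p ≠ q, gcd(p,q) = 1, Q_{p,q}(t) = 0, and the four inequalities t > p², t > p·q, t > q², and (p² + t)(p·q + t) > 2t² hold. Then there exists a perfect cuboid, i.e., positive integers x₁, x₂, x₃, d₁, d₂, d₃, L satisfying x₁² + x₂² + x₃² = L², x₂² + x₃² = d₁², x₃² + x₁² = d₂², and x₁² + x₂² = d₃². -/
/-- The cuboid characteristic polynomial `Q_{p,q}(t)`. -/
def cuboidQ {R : Type*} [CommRing R] (p q t : R) : R :=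
  t ^ 10 + (2 * q ^ 2 + p ^ 2) * (3 * q ^ 2 - 2 * p ^ 2) * t ^ 8
    + (q ^ 8 + 10 * p ^ 2 * q ^ 6 + 4 * p ^ 4 * q ^ 4 - 14 * p ^ 6 * q ^ 2 + p ^ 8) * t ^ 6
    - p ^ 2 * q ^ 2 * (q ^ 8 - 14 * p ^ 2 * q ^ 6 + 4 * p ^ 4 * q ^ 4 + 10 * p ^ 6 * q ^ 2 + p ^ 8) * t ^ 4
    - p ^ 6 * q ^ 6 * (q ^ 2 + 2 * p ^ 2) * (3 * p ^ 2 - 2 * q ^ 2) * t ^ 2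
    - p ^ 10 * q ^ 10

/-- If positive integers `p ≠ q` are coprime, `t` is a positive integer root of the cuboid
characteristic equation `Q_{p,q}(t) = 0`, and the four cuboid inequalities hold, then a
perfect cuboid exists. -/
theorem stmt_0 (p q t : ℤ) (hp : 0 < p) (hq : 0 < q) (ht : 0 < t)
    (hne : p ≠ q) (hcop : Int.gcd p q = 1)
    (hroot : cuboidQ p q t = 0)
    (h1 : t > p ^ 2) (h2 : t > p * q) (h3 : t > q ^ 2)
    (h4 : (p ^ 2 + t) * (p * q + t) > 2 * t ^ 2) :
    ∃ x₁ x₂ x₃ d₁ d₂ d₃ L : ℤ,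
      0 < x₁ ∧ 0 < x₂ ∧ 0 < x₃ ∧ 0 < d₁ ∧ 0 < d₂ ∧ 0 < d₃ ∧ 0 < L ∧
      x₁ ^ 2 + x₂ ^ 2 + x₃ ^ 2 = L ^ 2 ∧
      x₂ ^ 2 + x₃ ^ 2 = d₁ ^ 2 ∧
      x₃ ^ 2 + x₁ ^ 2 = d₂ ^ 2 ∧
      x₁ ^ 2 + x₂ ^ 2 = d₃ ^ 2 := by

  have hA : (0:ℤ) < t ^ 2 + p ^ 4 := by positivity
  have hB : (0:ℤ) < t ^ 2 + q ^ 4 := by positivity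
  have hC : (0:ℤ) < t ^ 2 + p ^ 2 * q ^ 2 := by positivity
  have hA' : (0:ℤ) < t ^ 2 - p ^ 4 := by nlinarith [mul_pos (sub_pos.mpr h1) (by positivity : (0:ℤ) < t + p ^ 2)]
  have hB' : (0:ℤ) < t ^ 2 - q ^ 4 := by nlinarith [mul_pos (sub_pos.mpr h3) (by positivity : (0:ℤ) < t + q ^ 2)]
  have hC' : (0:ℤ) < t ^ 2 - p ^ 2 * q ^ 2 := by nlinarith [mul_pos (sub_pos.mpr h2) (by positivity : (0:ℤ) < t + p * q)]
  simp only [cuboidQ] at hroot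
  refine ⟨(t ^ 2 - p ^ 4) * ((t ^ 2 + q ^ 4) * (t ^ 2 + p ^ 2 * q ^ 2)),
          2 * t * q ^ 2 * ((t ^ 2 + p ^ 4) * (t ^ 2 + p ^ 2 * q ^ 2)),
          (t ^ 2 - p ^ 2 * q ^ 2) * ((t ^ 2 + p ^ 4) * (t ^ 2 + q ^ 4)),
          2 * t * p ^ 2 * ((t ^ 2 + q ^ 4) * (t ^ 2 + p ^ 2 * q ^ 2)),
          (t ^ 2 - q ^ 4) * ((t ^ 2 + p ^ 4) * (t ^ 2 + p ^ 2 * q ^ 2)),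
          2 * t * p * q * ((t ^ 2 + p ^ 4) * (t ^ 2 + q ^ 4)),
          (t ^ 2 + p ^ 4) * ((t ^ 2 + q ^ 4) * (t ^ 2 + p ^ 2 * q ^ 2)),
          mul_pos hA' (mul_pos hB hC),
          mul_pos (by positivity) (mul_pos hA hC),
          mul_pos hC' (mul_pos hA hB),
          mul_pos (by positivity) (mul_pos hB hC),
          mul_pos hB' (mul_pos hA hC),
          mul_pos (by positivity) (mul_pos hA hB),
          mul_pos hA (mul_pos hB hC),
          ?_, ?_, ?_, ?_⟩
  · linear_combination (t ^ 2 - p ^ 2 * q ^ 2) * hroot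
  · linear_combination (t ^ 2 - p ^ 2 * q ^ 2) * hroot
  · linear_combination (t ^ 2 - p ^ 2 * q ^ 2) * hroot
  · linear_combination (t ^ 2 - p ^ 2 * q ^ 2) * hroot
end

section
/- Let p̃, q̃ be integers with p̃ > 0 and q̃ ≥ 97·p̃. Then there exists a real number t with Q_{p̃+q̃, q̃}(t) = 0 satisfying q̃² + 5·p̃·q̃ + 10·p̃² − 74·p̃³/q̃ < t < q̃² + 5·p̃·q̃ + 10·p̃². -/
set_option maxHeartbeats 4000000 in
theorem aux_root (p q : ℝ) (hp : 0 < p) (hq : 97 * p ≤ q) :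
    ∃ t : ℝ, cuboidQ (p + q) q t = 0 ∧
      q ^ 2 + 5 * p * q + 10 * p ^ 2 - 74 * p ^ 3 / q < t ∧
      t < q ^ 2 + 5 * p * q + 10 * p ^ 2 := by
  have hq0 : (0:ℝ) < q := lt_of_lt_of_le (by linarith) hq
  have hr : (0:ℝ) ≤ q - 97 * p := by linarith
  set a : ℝ := q ^ 2 + 5 * p * q + 10 * p ^ 2 - 74 * p ^ 3 / q with ha
  set b : ℝ := q ^ 2 + 5 * p * q + 10 * p ^ 2 with hb
  have hab : a < b := by
    have : 0 < 74 * p ^ 3 / q := by positivity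
    simp only [ha, hb]; linarith
  have hfa : cuboidQ (p + q) q a < 0 := by
    have key : q ^ 10 * cuboidQ (p + q) q a = -(1152 * p ^ 3 * (q - 97 * p) ^ 27 + 3040672 * p ^ 4 * (q - 97 * p) ^ 26 + 3864351360 * p ^ 5 * (q - 97 * p) ^ 25 + 3148251260992 * p ^ 6 * (q - 97 * p) ^ 24 + 1846736798172096 * p ^ 7 * (q - 97 * p) ^ 23 + 830534235685125504 * p ^ 8 * (q - 97 * p) ^ 22 + 297737822655683382872 * p ^ 9 * (q - 97 * p) ^ 21 + 87331441784352264035820 * p ^ 10 * (q - 97 * p) ^ 20 + 21346974441515794443267344 * p ^ 11 * (q - 97 * p) ^ 19 + 4406395056649624635423511152 * p ^ 12 * (q - 97 * p) ^ 18 + 775536529072284456744318340088 * p ^ 13 * (q - 97 * p) ^ 17 + 117196629811014711597480675876548 * p ^ 14 * (q - 97 * p) ^ 16 + 15279909666657963606864071875889552 * p ^ 15 * (q - 97 * p) ^ 15 + 1724034340743494409408902794198155704 * p ^ 16 * (q - 97 * p) ^ 14 + 168590622624065549287342541849170234504 * p ^ 17 * (q - 97 * p) ^ 13 + 14288389657649182531070125335222689184020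 * p ^ 18 * (q - 97 * p) ^ 12 + 1047979029664747690353867592395172496338928 * p ^ 19 * (q - 97 * p) ^ 11 + 66315440150581297239124855494436052448219296 * p ^ 20 * (q - 97 * p) ^ 10 + 3603053395867606160946246651004227953953065576 * p ^ 21 * (q - 97 * p) ^ 9 + 166916161748609853878365807720569764127192228636 * p ^ 22 * (q - 97 * p) ^ 8 + 6529912898435526350324324255241733028980707269424 * p ^ 23 * (q - 97 * p) ^ 7 + 212885143184663988914074035485641311348586319350424 * p ^ 24 * (q - 97 * p) ^ 6 + 5678627018130312484053059362373433828281482360392000 * p ^ 25 * (q - 97 * p) ^ 5 + 120743878249772439725152610306453385997519460975226848 * p ^ 26 * (q - 97 * p) ^ 4 + 1968356020940855452920179165445025743588507381479857920 * p ^ 27 * (q - 97 * p) ^ 3 + 23103875785246409749137006374782109053470350571845123200 * p ^ 28 * (q - 97 * p) ^ 2 + 173840745335778172359941205962843152697089492939511168000 * p ^ 29 * (q - 97 * p) ^ 1 + 629807788577099129318988093737829364453058769595942080000 * p ^ 30) := by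
      simp only [ha, cuboidQ]
      field_simp
      ring
    have hS0 : (0:ℝ) ≤ 1152 * p ^ 3 * (q - 97 * p) ^ 27 := mul_nonneg (mul_nonneg (by norm_num) (pow_nonneg hp.le 3)) (pow_nonneg hr 27)
    have hS1 : (0:ℝ) ≤ 3040672 * p ^ 4 * (q - 97 * p) ^ 26 := mul_nonneg (mul_nonneg (by norm_num) (pow_nonneg hp.le 4)) (pow_nonneg hr 26)
    have hS2 : (0:ℝ) ≤ 3864351360 * p ^ 5 * (q - 97 * p) ^ 25 := mul_nonneg (mul_nonneg (by norm_num) (pow_nonneg hp.le 5)) (pow_nonneg hr 25)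
    have hS3 : (0:ℝ) ≤ 3148251260992 * p ^ 6 * (q - 97 * p) ^ 24 := mul_nonneg (mul_nonneg (by norm_num) (pow_nonneg hp.le 6)) (pow_nonneg hr 24)
    have hS4 : (0:ℝ) ≤ 1846736798172096 * p ^ 7 * (q - 97 * p) ^ 23 := mul_nonneg (mul_nonneg (by norm_num) (pow_nonneg hp.le 7)) (pow_nonneg hr 23)
    have hS5 : (0:ℝ) ≤ 830534235685125504 * p ^ 8 * (q - 97 * p) ^ 22 := mul_nonneg (mul_nonneg (by norm_num) (pow_nonneg hp.le 8)) (pow_nonneg hr 22)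
    have hS6 : (0:ℝ) ≤ 297737822655683382872 * p ^ 9 * (q - 97 * p) ^ 21 := mul_nonneg (mul_nonneg (by norm_num) (pow_nonneg hp.le 9)) (pow_nonneg hr 21)
    have hS7 : (0:ℝ) ≤ 87331441784352264035820 * p ^ 10 * (q - 97 * p) ^ 20 := mul_nonneg (mul_nonneg (by norm_num) (pow_nonneg hp.le 10)) (pow_nonneg hr 20)
    have hS8 : (0:ℝ) ≤ 21346974441515794443267344 * p ^ 11 * (q - 97 * p) ^ 19 := mul_nonneg (mul_nonneg (by norm_num) (pow_nonneg hp.le 11)) (pow_nonneg hr 19)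
    have hS9 : (0:ℝ) ≤ 4406395056649624635423511152 * p ^ 12 * (q - 97 * p) ^ 18 := mul_nonneg (mul_nonneg (by norm_num) (pow_nonneg hp.le 12)) (pow_nonneg hr 18)
    have hS10 : (0:ℝ) ≤ 775536529072284456744318340088 * p ^ 13 * (q - 97 * p) ^ 17 := mul_nonneg (mul_nonneg (by norm_num) (pow_nonneg hp.le 13)) (pow_nonneg hr 17)
    have hS11 : (0:ℝ) ≤ 117196629811014711597480675876548 * p ^ 14 * (q - 97 * p) ^ 16 := mul_nonneg (mul_nonneg (by norm_num) (pow_nonneg hp.le 14)) (pow_nonneg hr 16)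
    have hS12 : (0:ℝ) ≤ 15279909666657963606864071875889552 * p ^ 15 * (q - 97 * p) ^ 15 := mul_nonneg (mul_nonneg (by norm_num) (pow_nonneg hp.le 15)) (pow_nonneg hr 15)
    have hS13 : (0:ℝ) ≤ 1724034340743494409408902794198155704 * p ^ 16 * (q - 97 * p) ^ 14 := mul_nonneg (mul_nonneg (by norm_num) (pow_nonneg hp.le 16)) (pow_nonneg hr 14)
    have hS14 : (0:ℝ) ≤ 168590622624065549287342541849170234504 * p ^ 17 * (q - 97 * p) ^ 13 := mul_nonneg (mul_nonneg (by norm_num) (pow_nonneg hp.le 17)) (pow_nonneg hr 13)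
    have hS15 : (0:ℝ) ≤ 14288389657649182531070125335222689184020 * p ^ 18 * (q - 97 * p) ^ 12 := mul_nonneg (mul_nonneg (by norm_num) (pow_nonneg hp.le 18)) (pow_nonneg hr 12)
    have hS16 : (0:ℝ) ≤ 1047979029664747690353867592395172496338928 * p ^ 19 * (q - 97 * p) ^ 11 := mul_nonneg (mul_nonneg (by norm_num) (pow_nonneg hp.le 19)) (pow_nonneg hr 11)
    have hS17 : (0:ℝ) ≤ 66315440150581297239124855494436052448219296 * p ^ 20 * (q - 97 * p) ^ 10 := mul_nonneg (mul_nonneg (by norm_num) (pow_nonneg hp.le 20)) (pow_nonneg hr 10)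
    have hS18 : (0:ℝ) ≤ 3603053395867606160946246651004227953953065576 * p ^ 21 * (q - 97 * p) ^ 9 := mul_nonneg (mul_nonneg (by norm_num) (pow_nonneg hp.le 21)) (pow_nonneg hr 9)
    have hS19 : (0:ℝ) ≤ 166916161748609853878365807720569764127192228636 * p ^ 22 * (q - 97 * p) ^ 8 := mul_nonneg (mul_nonneg (by norm_num) (pow_nonneg hp.le 22)) (pow_nonneg hr 8)
    have hS20 : (0:ℝ) ≤ 6529912898435526350324324255241733028980707269424 * p ^ 23 * (q - 97 * p) ^ 7 := mul_nonneg (mul_nonneg (by norm_num) (pow_nonneg hp.le 23)) (pow_nonneg hr 7)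
    have hS21 : (0:ℝ) ≤ 212885143184663988914074035485641311348586319350424 * p ^ 24 * (q - 97 * p) ^ 6 := mul_nonneg (mul_nonneg (by norm_num) (pow_nonneg hp.le 24)) (pow_nonneg hr 6)
    have hS22 : (0:ℝ) ≤ 5678627018130312484053059362373433828281482360392000 * p ^ 25 * (q - 97 * p) ^ 5 := mul_nonneg (mul_nonneg (by norm_num) (pow_nonneg hp.le 25)) (pow_nonneg hr 5)
    have hS23 : (0:ℝ) ≤ 120743878249772439725152610306453385997519460975226848 * p ^ 26 * (q - 97 * p) ^ 4 := mul_nonneg (mul_nonneg (by norm_num) (pow_nonneg hp.le 26)) (pow_nonneg hr 4)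
    have hS24 : (0:ℝ) ≤ 1968356020940855452920179165445025743588507381479857920 * p ^ 27 * (q - 97 * p) ^ 3 := mul_nonneg (mul_nonneg (by norm_num) (pow_nonneg hp.le 27)) (pow_nonneg hr 3)
    have hS25 : (0:ℝ) ≤ 23103875785246409749137006374782109053470350571845123200 * p ^ 28 * (q - 97 * p) ^ 2 := mul_nonneg (mul_nonneg (by norm_num) (pow_nonneg hp.le 28)) (pow_nonneg hr 2)
    have hS26 : (0:ℝ) ≤ 173840745335778172359941205962843152697089492939511168000 * p ^ 29 * (q - 97 * p) ^ 1 := mul_nonneg (mul_nonneg (by norm_num) (pow_nonneg hp.le 29)) (pow_nonneg hr 1)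
    have hSp : (0:ℝ) < 629807788577099129318988093737829364453058769595942080000 * p ^ 30 := by positivity
    have hSall : (0:ℝ) < 1152 * p ^ 3 * (q - 97 * p) ^ 27 + 3040672 * p ^ 4 * (q - 97 * p) ^ 26 + 3864351360 * p ^ 5 * (q - 97 * p) ^ 25 + 3148251260992 * p ^ 6 * (q - 97 * p) ^ 24 + 1846736798172096 * p ^ 7 * (q - 97 * p) ^ 23 + 830534235685125504 * p ^ 8 * (q - 97 * p) ^ 22 + 297737822655683382872 * p ^ 9 * (q - 97 * p) ^ 21 + 87331441784352264035820 * p ^ 10 * (q - 97 * p) ^ 20 + 21346974441515794443267344 * p ^ 11 * (q - 97 * p) ^ 19 + 4406395056649624635423511152 * p ^ 12 * (q - 97 * p) ^ 18 + 775536529072284456744318340088 * p ^ 13 * (q - 97 * p) ^ 17 + 117196629811014711597480675876548 * p ^ 14 * (q - 97 * p) ^ 16 + 15279909666657963606864071875889552 * p ^ 15 * (q - 97 * p) ^ 15 + 1724034340743494409408902794198155704 * p ^ 16 * (q - 97 * p) ^ 14 + 168590622624065549287342541849170234504 * p ^ 17 * (q - 97 * p) ^ 13 + 14288389657649182531070125335222689184020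 * p ^ 18 * (q - 97 * p) ^ 12 + 1047979029664747690353867592395172496338928 * p ^ 19 * (q - 97 * p) ^ 11 + 66315440150581297239124855494436052448219296 * p ^ 20 * (q - 97 * p) ^ 10 + 3603053395867606160946246651004227953953065576 * p ^ 21 * (q - 97 * p) ^ 9 + 166916161748609853878365807720569764127192228636 * p ^ 22 * (q - 97 * p) ^ 8 + 6529912898435526350324324255241733028980707269424 * p ^ 23 * (q - 97 * p) ^ 7 + 212885143184663988914074035485641311348586319350424 * p ^ 24 * (q - 97 * p) ^ 6 + 5678627018130312484053059362373433828281482360392000 * p ^ 25 * (q - 97 * p) ^ 5 + 120743878249772439725152610306453385997519460975226848 * p ^ 26 * (q - 97 * p) ^ 4 + 1968356020940855452920179165445025743588507381479857920 * p ^ 27 * (q - 97 * p) ^ 3 + 23103875785246409749137006374782109053470350571845123200 * p ^ 28 * (q - 97 * p) ^ 2 + 173840745335778172359941205962843152697089492939511168000 * p ^ 29 * (q - 97 * p) ^ 1 + 629807788577099129318988093737829364453058769595942080000 * p ^ 30 := by linarith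
    have h10 : (0:ℝ) < q ^ 10 := by positivity
    rcases mul_neg_iff.mp (show q ^ 10 * cuboidQ (p + q) q a < 0 by rw [key]; linarith) with ⟨_, h⟩ | ⟨h, _⟩
    · exact h
    · linarith
  have hfb : 0 < cuboidQ (p + q) q b := by
    have key : cuboidQ (p + q) q b = 1216 * p ^ 3 * q ^ 17 + 35616 * p ^ 4 * q ^ 16 + 523200 * p ^ 5 * q ^ 15 + 5111520 * p ^ 6 * q ^ 14 + 37038816 * p ^ 7 * q ^ 13 + 210366432 * p ^ 8 * q ^ 12 + 966180200 * p ^ 9 * q ^ 11 + 3653712972 * p ^ 10 * q ^ 10 + 11485697220 * p ^ 11 * q ^ 9 + 30111878140 * p ^ 12 * q ^ 8 + 65690788800 * p ^ 13 * q ^ 7 + 118321173300 * p ^ 14 * q ^ 6 + 173444836500 * p ^ 15 * q ^ 5 + 202173718500 * p ^ 16 * q ^ 4 + 180652680000 * p ^ 17 * q ^ 3 + 116482340000 * p ^ 18 * q ^ 2 + 48411000000 * p ^ 19 * q ^ 1 + 9801000000 * p ^ 20 := by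
      simp only [hb, cuboidQ]; ring
    have hF0 : (0:ℝ) ≤ 1216 * p ^ 3 * q ^ 17 := mul_nonneg (mul_nonneg (by norm_num) (pow_nonneg hp.le 3)) (pow_nonneg hq0.le 17)
    have hF1 : (0:ℝ) ≤ 35616 * p ^ 4 * q ^ 16 := mul_nonneg (mul_nonneg (by norm_num) (pow_nonneg hp.le 4)) (pow_nonneg hq0.le 16)
    have hF2 : (0:ℝ) ≤ 523200 * p ^ 5 * q ^ 15 := mul_nonneg (mul_nonneg (by norm_num) (pow_nonneg hp.le 5)) (pow_nonneg hq0.le 15)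
    have hF3 : (0:ℝ) ≤ 5111520 * p ^ 6 * q ^ 14 := mul_nonneg (mul_nonneg (by norm_num) (pow_nonneg hp.le 6)) (pow_nonneg hq0.le 14)
    have hF4 : (0:ℝ) ≤ 37038816 * p ^ 7 * q ^ 13 := mul_nonneg (mul_nonneg (by norm_num) (pow_nonneg hp.le 7)) (pow_nonneg hq0.le 13)
    have hF5 : (0:ℝ) ≤ 210366432 * p ^ 8 * q ^ 12 := mul_nonneg (mul_nonneg (by norm_num) (pow_nonneg hp.le 8)) (pow_nonneg hq0.le 12)
    have hF6 : (0:ℝ) ≤ 966180200 * p ^ 9 * q ^ 11 := mul_nonneg (mul_nonneg (by norm_num) (pow_nonneg hp.le 9)) (pow_nonneg hq0.le 11)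
    have hF7 : (0:ℝ) ≤ 3653712972 * p ^ 10 * q ^ 10 := mul_nonneg (mul_nonneg (by norm_num) (pow_nonneg hp.le 10)) (pow_nonneg hq0.le 10)
    have hF8 : (0:ℝ) ≤ 11485697220 * p ^ 11 * q ^ 9 := mul_nonneg (mul_nonneg (by norm_num) (pow_nonneg hp.le 11)) (pow_nonneg hq0.le 9)
    have hF9 : (0:ℝ) ≤ 30111878140 * p ^ 12 * q ^ 8 := mul_nonneg (mul_nonneg (by norm_num) (pow_nonneg hp.le 12)) (pow_nonneg hq0.le 8)
    have hF10 : (0:ℝ) ≤ 65690788800 * p ^ 13 * q ^ 7 := mul_nonneg (mul_nonneg (by norm_num) (pow_nonneg hp.le 13)) (pow_nonneg hq0.le 7)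
    have hF11 : (0:ℝ) ≤ 118321173300 * p ^ 14 * q ^ 6 := mul_nonneg (mul_nonneg (by norm_num) (pow_nonneg hp.le 14)) (pow_nonneg hq0.le 6)
    have hF12 : (0:ℝ) ≤ 173444836500 * p ^ 15 * q ^ 5 := mul_nonneg (mul_nonneg (by norm_num) (pow_nonneg hp.le 15)) (pow_nonneg hq0.le 5)
    have hF13 : (0:ℝ) ≤ 202173718500 * p ^ 16 * q ^ 4 := mul_nonneg (mul_nonneg (by norm_num) (pow_nonneg hp.le 16)) (pow_nonneg hq0.le 4)
    have hF14 : (0:ℝ) ≤ 180652680000 * p ^ 17 * q ^ 3 := mul_nonneg (mul_nonneg (by norm_num) (pow_nonneg hp.le 17)) (pow_nonneg hq0.le 3)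
    have hF15 : (0:ℝ) ≤ 116482340000 * p ^ 18 * q ^ 2 := mul_nonneg (mul_nonneg (by norm_num) (pow_nonneg hp.le 18)) (pow_nonneg hq0.le 2)
    have hF16 : (0:ℝ) ≤ 48411000000 * p ^ 19 * q ^ 1 := mul_nonneg (mul_nonneg (by norm_num) (pow_nonneg hp.le 19)) (pow_nonneg hq0.le 1)
    have hFp : (0:ℝ) < 9801000000 * p ^ 20 := by positivity
    linarith [key.ge, key.le]
  have hcont : ContinuousOn (fun t : ℝ => cuboidQ (p + q) q t) (Set.Icc a b) := by
    apply Continuous.continuousOn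
    unfold cuboidQ
    fun_prop
  have := intermediate_value_Ioo hab.le hcont
  have h0 : (0:ℝ) ∈ Set.Ioo (cuboidQ (p + q) q a) (cuboidQ (p + q) q b) := ⟨hfa, hfb⟩
  obtain ⟨t, ht, ht0⟩ := this h0
  exact ⟨t, ht0, ht.1, ht.2⟩

/-- For integers `p̃ > 0` and `q̃ ≥ 97 p̃` there is a real root of `Q_{p̃+q̃, q̃}` in the
asymptotic interval `(q̃² + 5p̃q̃ + 10p̃² − 74p̃³/q̃, q̃² + 5p̃q̃ + 10p̃²)`. -/
theorem stmt_5 (p' q' : ℤ) (hp : 0 < p') (hq : 97 * p' ≤ q') :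
    ∃ t : ℝ, cuboidQ ((p' : ℝ) + (q' : ℝ)) (q' : ℝ) t = 0 ∧
      (q' : ℝ) ^ 2 + 5 * (p' : ℝ) * (q' : ℝ) + 10 * (p' : ℝ) ^ 2
          - 74 * (p' : ℝ) ^ 3 / (q' : ℝ) < t ∧
      t < (q' : ℝ) ^ 2 + 5 * (p' : ℝ) * (q' : ℝ) + 10 * (p' : ℝ) ^ 2 := by
  have hp' : (0:ℝ) < (p' : ℝ) := by exact_mod_cast hp
  have hq' : 97 * (p' : ℝ) ≤ (q' : ℝ) := by exact_mod_cast hq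
  exact aux_root _ _ hp' hq'
end

section
/- Let p̃, q̃ be integers with p̃ < 0 and q̃ ≥ 97·|p̃|. Then there exists a real number t with Q_{p̃+q̃, q̃}(t) = 0 satisfying q̃² + 5·p̃·q̃ + 10·p̃² < t < q̃² + 5·p̃·q̃ + 10·p̃² + 74·|p̃|³/q̃. -/
/-- For integers `p̃ < 0` and `q̃ ≥ 97|p̃|` there is a real root of `Q_{p̃+q̃, q̃}` in the
asymptotic interval `(q̃² + 5p̃q̃ + 10p̃², q̃² + 5p̃q̃ + 10p̃² + 74|p̃|³/q̃)`. -/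
theorem stmt_6 (p' q' : ℤ) (hp : p' < 0) (hq : 97 * |p'| ≤ q') :
    ∃ t : ℝ, cuboidQ ((p' : ℝ) + (q' : ℝ)) (q' : ℝ) t = 0 ∧
      (q' : ℝ) ^ 2 + 5 * (p' : ℝ) * (q' : ℝ) + 10 * (p' : ℝ) ^ 2 < t ∧
      t < (q' : ℝ) ^ 2 + 5 * (p' : ℝ) * (q' : ℝ) + 10 * (p' : ℝ) ^ 2
          + 74 * |(p' : ℝ)| ^ 3 / (q' : ℝ) := by
  set s : ℝ := -(p' : ℝ) with hsdef
  have hs : 0 < s := by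
    simp only [hsdef]
    have : (p' : ℝ) < 0 := by exact_mod_cast hp
    linarith
  set r : ℝ := (q' : ℝ) - 97 * s with hrdef
  have hr : 0 ≤ r := by
    have h1 : |(p' : ℝ)| = s := by
      rw [abs_of_neg (show (p' : ℝ) < 0 by exact_mod_cast hp)]
    have h2 : (97 : ℝ) * |(p' : ℝ)| ≤ (q' : ℝ) := by exact_mod_cast hq
    rw [h1] at h2
    simp only [hrdef]; linarith
  have habs : |(p' : ℝ)| = s := by
    rw [abs_of_neg (show (p' : ℝ) < 0 by exact_mod_cast hp)]
  have hxp : (p' : ℝ) = -s := by simp [hsdef]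
  have hyq : (q' : ℝ) = 97 * s + r := by simp only [hrdef]; ring
  have hq0 : (0 : ℝ) < 97 * s + r := by linarith
  set A : ℝ := (q' : ℝ) ^ 2 + 5 * (p' : ℝ) * (q' : ℝ) + 10 * (p' : ℝ) ^ 2 with hAdef
  set B : ℝ := A + 74 * |(p' : ℝ)| ^ 3 / (q' : ℝ) with hBdef
  have hAB : A < B := by
    rw [hBdef]
    have : 0 < 74 * |(p' : ℝ)| ^ 3 / (q' : ℝ) := by
      rw [habs, hyq]; positivity
    linarith
  have hfA : cuboidQ ((p' : ℝ) + (q' : ℝ)) (q' : ℝ) A < 0 := by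
    have key : cuboidQ ((p' : ℝ) + (q' : ℝ)) (q' : ℝ) A =
        -(1216*s^3*r^17 + 1969568*s^4*r^16 + 1501269952*s^5*r^15 + 715213881440*s^6*r^14 + 238517583497056*s^7*r^13 + 59090739248055200*s^8*r^12 + 11261190797521362792*s^9*r^11 + 1686254234628692567820*s^10*r^10 + 200856699202857758257860*s^11*r^9 + 19140298666695222569233524*s^12*r^8 + 1459184440222807950936747168*s^13*r^7 + 88490390476111256531148012612*s^14*r^6 + 4216535163378576781918179356916*s^15*r^5 + 154554268162428504609889971223260*s^16*r^4 + 4208434450788578152431252798719424*s^17*r^3 + 80217130983771719064114168891178464*s^18*r^2 + 955658273844781211429257973193182400*s^19*r + 5357819548098707177296232398911711168*s^20) := by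
      rw [hAdef, hxp, hyq]
      simp only [cuboidQ]
      ring
    rw [key]
    have : (0:ℝ) < 1216*s^3*r^17 + 1969568*s^4*r^16 + 1501269952*s^5*r^15 + 715213881440*s^6*r^14 + 238517583497056*s^7*r^13 + 59090739248055200*s^8*r^12 + 11261190797521362792*s^9*r^11 + 1686254234628692567820*s^10*r^10 + 200856699202857758257860*s^11*r^9 + 19140298666695222569233524*s^12*r^8 + 1459184440222807950936747168*s^13*r^7 + 88490390476111256531148012612*s^14*r^6 + 4216535163378576781918179356916*s^15*r^5 + 154554268162428504609889971223260*s^16*r^4 + 4208434450788578152431252798719424*s^17*r^3 + 80217130983771719064114168891178464*s^18*r^2 + 955658273844781211429257973193182400*s^19*r + 5357819548098707177296232398911711168*s^20 := by positivity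
    linarith
  have hfB : 0 < cuboidQ ((p' : ℝ) + (q' : ℝ)) (q' : ℝ) B := by
    have key : cuboidQ ((p' : ℝ) + (q' : ℝ)) (q' : ℝ) B =
        (1152*s^3*r^27 + 2993504*s^4*r^26 + 3745393664*s^5*r^25 + 3004008659008*s^6*r^24 + 1734794613086144*s^7*r^23 + 768090177426603776*s^8*r^22 + 271081972497551621976*s^9*r^21 + 78279774851738666376836*s^10*r^20 + 18837702458316288552927472*s^11*r^19 + 3828142188675035111119544016*s^12*r^18 + 663315704928996137982380835064*s^13*r^17 + 98684037052834203556587595854380*s^14*r^16 + 12666794100364183307415132793611280*s^15*r^15 + 1407039721471161067290806112640158632*s^16*r^14 + 135459281902579297793282983844607186088*s^17*r^13 + 11302485057663352784789376865587488370076*s^18*r^12 + 816129262059381374683285379198182075301840*s^19*r^11 + 50843696811605606661981122708467652095368032*s^20*r^10 + 2719629108671921507625942537841757660380035624*s^21*r^9 + 124037872935287637527750071060170322054082577780*s^22*r^8 + 4777279748110956351254099504976576125894964696560*s^23*r^7 + 153333284221396384607476034506431647099228813901512*s^24*r^6 + 4026731474584695114334313651725344295488867724770272*s^25*r^5 + 84293315817836456153673755865589909865955159647831296*s^26*r^4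 + 1352853661156970962045056090395590433701787618367340544*s^27*r^3 + 15633334840884239635243141185893959937889412772114857984*s^28*r^2 + 115807973968207112780574144440911224063827051932098232320*s^29*r + 413062248136297948842674935061460096739377623154103943168*s^30) / (97 * s + r) ^ 10 := by
      rw [hBdef, hAdef, habs, hxp, hyq]
      simp only [cuboidQ]
      field_simp
      ring
    rw [key]
    positivity
  have hcont : ContinuousOn (fun t => cuboidQ ((p' : ℝ) + (q' : ℝ)) (q' : ℝ) t)
      (Set.Icc A B) := by
    apply Continuous.continuousOn
    unfold cuboidQ
    fun_prop
  have hsub := intermediate_value_Ioo hAB.le hcont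
  have h0 : (0 : ℝ) ∈ Set.Ioo (cuboidQ ((p' : ℝ) + (q' : ℝ)) (q' : ℝ) A)
      (cuboidQ ((p' : ℝ) + (q' : ℝ)) (q' : ℝ) B) := ⟨hfA, hfB⟩
  obtain ⟨t, htmem, htval⟩ := hsub h0
  exact ⟨t, htval, htmem.1, htmem.2⟩
end

section
/- Let p̃, q̃ be integers with p̃ ≠ 0 and q̃ ≥ 97·|p̃|. Then the degree-ten polynomial t ↦ Q_{p̃+q̃, q̃}(t), regarded as a polynomial over ℂ, has ten pairwise distinct complex roots; i.e., all of its roots are simple. -/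
open Polynomial

/-- Bezout certificate: the quintic `R` (with `Q(t) = R(t^2)`) and its derivative
generate the discriminant, a nonzero constant. -/
lemma cuboid_bezout (p q s : ℂ)
    (hR : s ^ 5 + (2 * q ^ 2 + p ^ 2) * (3 * q ^ 2 - 2 * p ^ 2) * s ^ 4
      + (q ^ 8 + 10 * p ^ 2 * q ^ 6 + 4 * p ^ 4 * q ^ 4 - 14 * p ^ 6 * q ^ 2 + p ^ 8) * s ^ 3
      - p ^ 2 * q ^ 2 * (q ^ 8 - 14 * p ^ 2 * q ^ 6 + 4 * p ^ 4 * q ^ 4 + 10 * p ^ 6 * q ^ 2 + p ^ 8) * s ^ 2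
      - p ^ 6 * q ^ 6 * (q ^ 2 + 2 * p ^ 2) * (3 * p ^ 2 - 2 * q ^ 2) * s
      - p ^ 10 * q ^ 10 = 0)
    (hR' : 5 * s ^ 4 + 4 * (2 * q ^ 2 + p ^ 2) * (3 * q ^ 2 - 2 * p ^ 2) * s ^ 3
      + 3 * (q ^ 8 + 10 * p ^ 2 * q ^ 6 + 4 * p ^ 4 * q ^ 4 - 14 * p ^ 6 * q ^ 2 + p ^ 8) * s ^ 2
      - 2 * p ^ 2 * q ^ 2 * (q ^ 8 - 14 * p ^ 2 * q ^ 6 + 4 * p ^ 4 * q ^ 4 + 10 * p ^ 6 * q ^ 2 + p ^ 8) * s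
      - p ^ 6 * q ^ 6 * (q ^ 2 + 2 * p ^ 2) * (3 * p ^ 2 - 2 * q ^ 2) = 0) :
    2048 * p ^ 18 * q ^ 18 * (p ^ 2 - q ^ 2) ^ 12 * (p ^ 2 + q ^ 2) ^ 4 *
      (p ^ 12 + 15 * p ^ 10 * q ^ 2 - 1585 * p ^ 8 * q ^ 4 + 3052 * p ^ 6 * q ^ 6
        - 1585 * p ^ 4 * q ^ 8 + 15 * p ^ 2 * q ^ 10 + q ^ 12) = 0 := by
  linear_combination ((128 * p ^ 6 * q ^ 54 - 960 * p ^ 8 * q ^ 52 - 227072 * p ^ 10 * q ^ 50 + 5229120 * p ^ 12 * q ^ 48 - 38192896 * p ^ 14 * q ^ 46 + 131380160 * p ^ 16 * q ^ 44 - 210937088 * p ^ 18 * q ^ 42 + 15826368 * p ^ 20 * q ^ 40 + 534766336 * p ^ 22 * q ^ 38 - 841383232 * p ^ 24 * q ^ 36 + 211667072 * p ^ 26 * q ^ 34 + 858052672 * p ^ 28 * q ^ 32 - 1067477248 * p ^ 30 * q ^ 30 + 213970624 * p ^ 32 * q ^ 28 + 558254976 * p ^ 34 * q ^ 26 - 518767040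 * p ^ 36 * q ^ 24 + 99177088 * p ^ 38 * q ^ 22 + 113495552 * p ^ 40 * q ^ 20 - 85993856 * p ^ 42 * q ^ 18 + 22585472 * p ^ 44 * q ^ 16 - 1041920 * p ^ 46 * q ^ 14 - 388992 * p ^ 48 * q ^ 12 + 4480 * p ^ 50 * q ^ 10 + 256 * p ^ 52 * q ^ 8) + (-192 * p ^ 4 * q ^ 52 - 3456 * p ^ 6 * q ^ 50 + 292416 * p ^ 8 * q ^ 48 - 179456 * p ^ 10 * q ^ 46 - 16667712 * p ^ 12 * q ^ 44 + 82470144 * p ^ 14 * q ^ 42 - 121329216 * p ^ 16 * q ^ 40 - 126347776 * p ^ 18 * q ^ 38 + 628022976 * p ^ 20 * q ^ 36 - 619564800 * p ^ 22 * q ^ 34 - 380723520 * p ^ 24 * q ^ 32 + 1340128640 * p ^ 26 * q ^ 30 - 947919680 * p ^ 28 * q ^ 28 - 340364800 * p ^ 30 * q ^ 26 + 1020713152 * p ^ 32 * q ^ 24 - 656078464 * p ^ 34 * q ^ 22 + 16356096 * p ^ 36 * q ^ 20 + 253365376 * p ^ 38 * q ^ 18 - 187672576 * p ^ 40 * q ^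 16 + 66032000 * p ^ 42 * q ^ 14 - 11075968 * p ^ 44 * q ^ 12 + 542976 * p ^ 46 * q ^ 10 + 4224 * p ^ 48 * q ^ 8 - 384 * p ^ 50 * q ^ 6) * s ^ 1 + (-1536 * p ^ 4 * q ^ 48 - 12032 * p ^ 6 * q ^ 46 + 2482880 * p ^ 8 * q ^ 44 - 26338560 * p ^ 10 * q ^ 42 + 105639616 * p ^ 12 * q ^ 40 - 183051264 * p ^ 14 * q ^ 38 + 33281856 * p ^ 16 * q ^ 36 + 395189376 * p ^ 18 * q ^ 34 - 608838720 * p ^ 20 * q ^ 32 + 161450752 * p ^ 22 * q ^ 30 + 500842432 * p ^ 24 * q ^ 28 - 604360832 * p ^ 26 * q ^ 26 + 171885120 * p ^ 28 * q ^ 24 + 193113600 * p ^ 30 * q ^ 22 - 219451456 * p ^ 32 * q ^ 20 + 86464384 * p ^ 34 * q ^ 18 + 5057344 * p ^ 36 * q ^ 16 - 21039616 * p ^ 38 * q ^ 14 + 9098880 * p ^ 40 * q ^ 12 - 1416832 * p ^ 42 * q ^ 10 + 3584 * p ^ 44 * q ^ 8 + 1024 * p ^ 46 * q ^ 6) * s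 ^ 2 + (-320 * p ^ 4 * q ^ 44 - 2560 * p ^ 6 * q ^ 42 + 516800 * p ^ 8 * q ^ 40 - 5400320 * p ^ 10 * q ^ 38 + 21204800 * p ^ 12 * q ^ 36 - 36165120 * p ^ 14 * q ^ 34 + 8225600 * p ^ 16 * q ^ 32 + 69700480 * p ^ 18 * q ^ 30 - 110406720 * p ^ 20 * q ^ 28 + 40788480 * p ^ 22 * q ^ 26 + 68242880 * p ^ 24 * q ^ 24 - 98742400 * p ^ 26 * q ^ 22 + 46541760 * p ^ 28 * q ^ 20 + 10447360 * p ^ 30 * q ^ 18 - 28159040 * p ^ 32 * q ^ 16 + 18488960 * p ^ 34 * q ^ 14 - 6163840 * p ^ 36 * q ^ 12 + 885760 * p ^ 38 * q ^ 10 - 1920 * p ^ 40 * q ^ 8 - 640 * p ^ 42 * q ^ 6) * s ^ 3) * hR + ((64 * p ^ 10 * q ^ 54 + 512 * p ^ 12 * q ^ 52 - 106432 * p ^ 14 * q ^ 50 + 947968 * p ^ 16 * q ^ 48 - 3436096 * p ^ 18 * q ^ 46 + 4268544 * p ^ 20 * q ^ 44 + 8617408 * p ^ 22 * q ^ 42 -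 37488128 * p ^ 24 * q ^ 40 + 42577344 * p ^ 26 * q ^ 38 + 20349056 * p ^ 28 * q ^ 36 - 101194432 * p ^ 30 * q ^ 34 + 87479040 * p ^ 32 * q ^ 32 + 20935104 * p ^ 34 * q ^ 30 - 94236800 * p ^ 36 * q ^ 28 + 64465728 * p ^ 38 * q ^ 26 + 466944 * p ^ 40 * q ^ 24 - 26649856 * p ^ 42 * q ^ 22 + 17575296 * p ^ 44 * q ^ 20 - 5205632 * p ^ 46 * q ^ 18 + 637952 * p ^ 48 * q ^ 16 - 3200 * p ^ 50 * q ^ 14 - 384 * p ^ 52 * q ^ 12) + (-64 * p ^ 6 * q ^ 54 + 448 * p ^ 8 * q ^ 52 + 112448 * p ^ 10 * q ^ 50 - 2586432 * p ^ 12 * q ^ 48 + 19309760 * p ^ 14 * q ^ 46 - 67242432 * p ^ 16 * q ^ 44 + 107940544 * p ^ 18 * q ^ 42 - 7050176 * p ^ 20 * q ^ 40 - 270187840 * p ^ 22 * q ^ 38 + 414190400 * p ^ 24 * q ^ 36 - 96153280 * p ^ 26 * q ^ 34 - 413867200 * p ^ 28 * q ^ 32 + 499508928 * p ^ 30 * q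 ^ 30 - 100397248 * p ^ 32 * q ^ 28 - 248011712 * p ^ 34 * q ^ 26 + 232551744 * p ^ 36 * q ^ 24 - 50135936 * p ^ 38 * q ^ 22 - 45522432 * p ^ 40 * q ^ 20 + 37089408 * p ^ 42 * q ^ 18 - 10263808 * p ^ 44 * q ^ 16 + 529792 * p ^ 46 * q ^ 14 + 187264 * p ^ 48 * q ^ 12 - 2048 * p ^ 50 * q ^ 10 - 128 * p ^ 52 * q ^ 8) * s ^ 1 + (64 * p ^ 4 * q ^ 52 + 1152 * p ^ 6 * q ^ 50 - 97600 * p ^ 8 * q ^ 48 + 56768 * p ^ 10 * q ^ 46 + 5701696 * p ^ 12 * q ^ 44 - 27971136 * p ^ 14 * q ^ 42 + 39937600 * p ^ 16 * q ^ 40 + 46485824 * p ^ 18 * q ^ 38 - 214697024 * p ^ 20 * q ^ 36 + 201799104 * p ^ 22 * q ^ 34 + 142526784 * p ^ 24 * q ^ 32 - 454195392 * p ^ 26 * q ^ 30 + 304568256 * p ^ 28 * q ^ 28 + 127743296 * p ^ 30 * q ^ 26 - 341658048 * p ^ 32 * q ^ 24 + 212607808 * p ^ 34 * q ^ 22 -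 2072832 * p ^ 36 * q ^ 20 - 84421952 * p ^ 38 * q ^ 18 + 62094592 * p ^ 40 * q ^ 16 - 21924352 * p ^ 42 * q ^ 14 + 3697920 * p ^ 44 * q ^ 12 - 181248 * p ^ 46 * q ^ 10 - 1408 * p ^ 48 * q ^ 8 + 128 * p ^ 50 * q ^ 6) * s ^ 2 + (384 * p ^ 4 * q ^ 48 + 3008 * p ^ 6 * q ^ 46 - 620736 * p ^ 8 * q ^ 44 + 6584256 * p ^ 10 * q ^ 42 - 26391744 * p ^ 12 * q ^ 40 + 45706048 * p ^ 14 * q ^ 38 - 8380736 * p ^ 16 * q ^ 36 - 98330176 * p ^ 18 * q ^ 34 + 151711424 * p ^ 20 * q ^ 32 - 40919616 * p ^ 22 * q ^ 30 - 123747776 * p ^ 24 * q ^ 28 + 150563136 * p ^ 26 * q ^ 26 - 44037312 * p ^ 28 * q ^ 24 - 47167808 * p ^ 30 * q ^ 22 + 54789696 * p ^ 32 * q ^ 20 - 22020800 * p ^ 34 * q ^ 18 - 1045312 * p ^ 36 * q ^ 16 + 5227904 * p ^ 38 * q ^ 14 - 2276992 * p ^ 40 * q ^ 12 + 354304 * p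 ^ 42 * q ^ 10 - 896 * p ^ 44 * q ^ 8 - 256 * p ^ 46 * q ^ 6) * s ^ 3 + (64 * p ^ 4 * q ^ 44 + 512 * p ^ 6 * q ^ 42 - 103360 * p ^ 8 * q ^ 40 + 1080064 * p ^ 10 * q ^ 38 - 4240960 * p ^ 12 * q ^ 36 + 7233024 * p ^ 14 * q ^ 34 - 1645120 * p ^ 16 * q ^ 32 - 13940096 * p ^ 18 * q ^ 30 + 22081344 * p ^ 20 * q ^ 28 - 8157696 * p ^ 22 * q ^ 26 - 13648576 * p ^ 24 * q ^ 24 + 19748480 * p ^ 26 * q ^ 22 - 9308352 * p ^ 28 * q ^ 20 - 2089472 * p ^ 30 * q ^ 18 + 5631808 * p ^ 32 * q ^ 16 - 3697792 * p ^ 34 * q ^ 14 + 1232768 * p ^ 36 * q ^ 12 - 177152 * p ^ 38 * q ^ 10 + 384 * p ^ 40 * q ^ 8 + 128 * p ^ 42 * q ^ 6) * s ^ 4) * hR'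

/-- The key inequality: the last discriminant factor is negative near `p = q`. -/
lemma K_neg (a b : ℤ) (hb : 0 < b) (habs : 48 * |a ^ 2 - b ^ 2| ≤ b ^ 2) :
    a ^ 12 + 15 * a ^ 10 * b ^ 2 - 1585 * a ^ 8 * b ^ 4 + 3052 * a ^ 6 * b ^ 6
      - 1585 * a ^ 4 * b ^ 8 + 15 * a ^ 2 * b ^ 10 + b ^ 12 < 0 := by
  have h1 : 48 * (a ^ 2 - b ^ 2) ≤ b ^ 2 := by
    have := le_abs_self (a ^ 2 - b ^ 2); nlinarith
  have h2 : -(b ^ 2) ≤ 48 * (a ^ 2 - b ^ 2) := by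
    have := neg_abs_le (a ^ 2 - b ^ 2); nlinarith
  set u : ℤ := 49 * b ^ 2 - 48 * a ^ 2 with hu_def
  set v : ℤ := 48 * a ^ 2 - 47 * b ^ 2 with hv_def
  have hu : 0 ≤ u := by simp only [hu_def]; linarith
  have hv : 0 ≤ v := by simp only [hv_def]; linarith
  have huv : 0 < u + v := by
    have : u + v = 2 * b ^ 2 := by ring
    rw [this]; positivity
  have key : (782757789696 : ℤ) * (a ^ 12 + 15 * a ^ 10 * b ^ 2 - 1585 * a ^ 8 * b ^ 4
      + 3052 * a ^ 6 * b ^ 6 - 1585 * a ^ 4 * b ^ 8 + 15 * a ^ 2 * b ^ 10 + b ^ 12)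
      = -(1127335602959 * v ^ 6 + 6592769749446 * u * v ^ 5 + 16095703760193 * u ^ 2 * v ^ 4
        + 20998960856084 * u ^ 3 * v ^ 3 + 15440378487969 * u ^ 4 * v ^ 2
        + 6066854351430 * u ^ 5 * v + 995167105775 * u ^ 6) := by
    simp only [hu_def, hv_def]; ring
  have hsum : 0 < 1127335602959 * v ^ 6 + 6592769749446 * u * v ^ 5 + 16095703760193 * u ^ 2 * v ^ 4
        + 20998960856084 * u ^ 3 * v ^ 3 + 15440378487969 * u ^ 4 * v ^ 2
        + 6066854351430 * u ^ 5 * v + 995167105775 * u ^ 6 := by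
    rcases lt_or_ge 0 u with h | h
    · have t0 : 0 < 995167105775 * u ^ 6 := by positivity
      have t1 : 0 ≤ 1127335602959 * v ^ 6 := by positivity
      have t2 : 0 ≤ 6592769749446 * u * v ^ 5 := by positivity
      have t3 : 0 ≤ 16095703760193 * u ^ 2 * v ^ 4 := by positivity
      have t4 : 0 ≤ 20998960856084 * u ^ 3 * v ^ 3 := by positivity
      have t5 : 0 ≤ 15440378487969 * u ^ 4 * v ^ 2 := by positivity
      have t6 : 0 ≤ 6066854351430 * u ^ 5 * v := by positivity
      linarith
    · have hv' : 0 < v := by linarith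
      have t0 : 0 < 1127335602959 * v ^ 6 := by positivity
      have t2 : 0 ≤ 6592769749446 * u * v ^ 5 := by positivity
      have t3 : 0 ≤ 16095703760193 * u ^ 2 * v ^ 4 := by positivity
      have t4 : 0 ≤ 20998960856084 * u ^ 3 * v ^ 3 := by positivity
      have t5 : 0 ≤ 15440378487969 * u ^ 4 * v ^ 2 := by positivity
      have t6 : 0 ≤ 6066854351430 * u ^ 5 * v := by positivity
      have t7 : 0 ≤ 995167105775 * u ^ 6 := by positivity
      linarith
  linarith

/-- For integers `p̃ ≠ 0` and `q̃ ≥ 97|p̃|`, the degree-ten polynomial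
`t ↦ Q_{p̃+q̃, q̃}(t)` over `ℂ` has ten pairwise distinct roots, i.e. all of its roots
are simple. -/
theorem stmt_12 (p' q' : ℤ) (hp : p' ≠ 0) (hq : 97 * |p'| ≤ q') :
    ∃ r : Fin 10 → ℂ, Function.Injective r ∧
      (∀ i, cuboidQ ((p' : ℂ) + (q' : ℂ)) (q' : ℂ) (r i) = 0) ∧
      (∀ t : ℂ, cuboidQ ((p' : ℂ) + (q' : ℂ)) (q' : ℂ) t = 0 → ∃ i, t = r i) := by
  -- integer-level facts
  have habs1 : (1 : ℤ) ≤ |p'| := Int.one_le_abs hp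
  have hq0 : (0 : ℤ) < q' := by linarith
  have hple : p' ≤ |p'| := le_abs_self p'
  have hnle : -|p'| ≤ p' := neg_abs_le p'
  have ha0 : (0 : ℤ) < p' + q' := by nlinarith
  have hapq : (0 : ℤ) < p' + 2 * q' := by nlinarith
  set a : ℤ := p' + q' with ha_def
  have habs : 48 * |a ^ 2 - q' ^ 2| ≤ q' ^ 2 := by
    have hfac : a ^ 2 - q' ^ 2 = p' * (p' + 2 * q') := by rw [ha_def]; ring
    rw [hfac, abs_mul, abs_of_pos hapq]
    have hb1 : 97 * (p' + 2 * q') ≤ 195 * q' := by nlinarith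
    have hb2 : (97 * |p'|) * (97 * (p' + 2 * q')) ≤ q' * (195 * q') := by
      apply mul_le_mul hq hb1 (by positivity) (by linarith)
    nlinarith [abs_nonneg p', sq_nonneg q']
  have hK := K_neg a q' hq0 habs
  have hm : a ^ 2 - q' ^ 2 ≠ 0 := by
    have : a ^ 2 - q' ^ 2 = p' * (p' + 2 * q') := by rw [ha_def]; ring
    rw [this]
    exact mul_ne_zero hp (by linarith)
  have hDint : (2048 : ℤ) * a ^ 18 * q' ^ 18 * (a ^ 2 - q' ^ 2) ^ 12 * (a ^ 2 + q' ^ 2) ^ 4 *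
      (a ^ 12 + 15 * a ^ 10 * q' ^ 2 - 1585 * a ^ 8 * q' ^ 4 + 3052 * a ^ 6 * q' ^ 6
        - 1585 * a ^ 4 * q' ^ 8 + 15 * a ^ 2 * q' ^ 10 + q' ^ 12) ≠ 0 := by
    apply mul_ne_zero
    apply mul_ne_zero
    apply mul_ne_zero
    apply mul_ne_zero
    apply mul_ne_zero
    · norm_num
    · exact pow_ne_zero _ (ne_of_gt ha0)
    · exact pow_ne_zero _ (ne_of_gt hq0)
    · exact pow_ne_zero _ hm
    · exact pow_ne_zero _ (by positivity)
    · exact ne_of_lt hK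
  -- complex setup
  set pc : ℂ := (p' : ℂ) + (q' : ℂ) with hpc_def
  set qc : ℂ := (q' : ℂ) with hqc_def
  have hpc0 : pc ≠ 0 := by
    rw [hpc_def]
    have : ((p' + q' : ℤ) : ℂ) ≠ 0 := Int.cast_ne_zero.mpr (ne_of_gt ha0)
    push_cast at this; exact this
  have hqc0 : qc ≠ 0 := by
    rw [hqc_def]
    exact Int.cast_ne_zero.mpr (ne_of_gt hq0)
  set f : ℂ[X] := X ^ 10 + C ((2 * qc ^ 2 + pc ^ 2) * (3 * qc ^ 2 - 2 * pc ^ 2)) * X ^ 8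
      + C (qc ^ 8 + 10 * pc ^ 2 * qc ^ 6 + 4 * pc ^ 4 * qc ^ 4 - 14 * pc ^ 6 * qc ^ 2 + pc ^ 8) * X ^ 6
      - C (pc ^ 2 * qc ^ 2 * (qc ^ 8 - 14 * pc ^ 2 * qc ^ 6 + 4 * pc ^ 4 * qc ^ 4 + 10 * pc ^ 6 * qc ^ 2 + pc ^ 8)) * X ^ 4
      - C (pc ^ 6 * qc ^ 6 * (qc ^ 2 + 2 * pc ^ 2) * (3 * pc ^ 2 - 2 * qc ^ 2)) * X ^ 2
      - C (pc ^ 10 * qc ^ 10) with hf_def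
  have hfe : ∀ z : ℂ, f.eval z = cuboidQ pc qc z := by
    intro z
    rw [hf_def]
    simp only [eval_add, eval_sub, eval_mul, eval_pow, eval_C, eval_X]
    simp only [cuboidQ]
  have hdeg : f.natDegree = 10 := by
    rw [hf_def]
    compute_degree!
  have hsplit : Splits f := IsAlgClosed.splits f
  have hcard : f.roots.card = 10 := by
    rw [(splits_iff_card_roots).mp hsplit, hdeg]
  have hne : f ≠ 0 := by
    intro h
    rw [h] at hcard
    simp at hcard
  -- no multiple roots
  have hmult : ∀ z : ℂ, f.eval z = 0 → f.derivative.eval z = 0 → False := by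
    intro z h0 h1
    have hz0 : z ≠ 0 := by
      intro h
      rw [h, hfe] at h0
      simp only [cuboidQ] at h0
      have : pc ^ 10 * qc ^ 10 = 0 := by linear_combination -h0
      rcases mul_eq_zero.mp this with h' | h'
      · exact hpc0 (pow_eq_zero_iff (by norm_num) |>.mp h')
      · exact hqc0 (pow_eq_zero_iff (by norm_num) |>.mp h')
    have h0' : cuboidQ pc qc z = 0 := by rw [← hfe]; exact h0
    have h1' : 10 * z ^ 9 + 8 * ((2 * qc ^ 2 + pc ^ 2) * (3 * qc ^ 2 - 2 * pc ^ 2)) * z ^ 7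
        + 6 * (qc ^ 8 + 10 * pc ^ 2 * qc ^ 6 + 4 * pc ^ 4 * qc ^ 4 - 14 * pc ^ 6 * qc ^ 2 + pc ^ 8) * z ^ 5
        - 4 * (pc ^ 2 * qc ^ 2 * (qc ^ 8 - 14 * pc ^ 2 * qc ^ 6 + 4 * pc ^ 4 * qc ^ 4 + 10 * pc ^ 6 * qc ^ 2 + pc ^ 8)) * z ^ 3
        - 2 * (pc ^ 6 * qc ^ 6 * (qc ^ 2 + 2 * pc ^ 2) * (3 * pc ^ 2 - 2 * qc ^ 2)) * z = 0 := by
      rw [hf_def] at h1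
      simp only [derivative_add, derivative_sub, derivative_mul, derivative_C, derivative_X_pow,
        eval_add, eval_sub, eval_mul, eval_pow, eval_C, eval_X, eval_natCast, zero_mul, mul_zero,
        zero_add, add_zero, eval_zero] at h1
      push_cast at h1
      linear_combination h1
    set s : ℂ := z ^ 2 with hs_def
    have hR : s ^ 5 + (2 * qc ^ 2 + pc ^ 2) * (3 * qc ^ 2 - 2 * pc ^ 2) * s ^ 4
        + (qc ^ 8 + 10 * pc ^ 2 * qc ^ 6 + 4 * pc ^ 4 * qc ^ 4 - 14 * pc ^ 6 * qc ^ 2 + pc ^ 8) * s ^ 3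
        - pc ^ 2 * qc ^ 2 * (qc ^ 8 - 14 * pc ^ 2 * qc ^ 6 + 4 * pc ^ 4 * qc ^ 4 + 10 * pc ^ 6 * qc ^ 2 + pc ^ 8) * s ^ 2
        - pc ^ 6 * qc ^ 6 * (qc ^ 2 + 2 * pc ^ 2) * (3 * pc ^ 2 - 2 * qc ^ 2) * s
        - pc ^ 10 * qc ^ 10 = 0 := by
      simp only [hs_def]
      simp only [cuboidQ] at h0'
      linear_combination h0'
    have hR2 : (2 * z) * (5 * s ^ 4 + 4 * (2 * qc ^ 2 + pc ^ 2) * (3 * qc ^ 2 - 2 * pc ^ 2) * s ^ 3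
        + 3 * (qc ^ 8 + 10 * pc ^ 2 * qc ^ 6 + 4 * pc ^ 4 * qc ^ 4 - 14 * pc ^ 6 * qc ^ 2 + pc ^ 8) * s ^ 2
        - 2 * pc ^ 2 * qc ^ 2 * (qc ^ 8 - 14 * pc ^ 2 * qc ^ 6 + 4 * pc ^ 4 * qc ^ 4 + 10 * pc ^ 6 * qc ^ 2 + pc ^ 8) * s
        - pc ^ 6 * qc ^ 6 * (qc ^ 2 + 2 * pc ^ 2) * (3 * pc ^ 2 - 2 * qc ^ 2)) = 0 := by
      simp only [hs_def]
      linear_combination h1'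
    have hR' : 5 * s ^ 4 + 4 * (2 * qc ^ 2 + pc ^ 2) * (3 * qc ^ 2 - 2 * pc ^ 2) * s ^ 3
        + 3 * (qc ^ 8 + 10 * pc ^ 2 * qc ^ 6 + 4 * pc ^ 4 * qc ^ 4 - 14 * pc ^ 6 * qc ^ 2 + pc ^ 8) * s ^ 2
        - 2 * pc ^ 2 * qc ^ 2 * (qc ^ 8 - 14 * pc ^ 2 * qc ^ 6 + 4 * pc ^ 4 * qc ^ 4 + 10 * pc ^ 6 * qc ^ 2 + pc ^ 8) * s
        - pc ^ 6 * qc ^ 6 * (qc ^ 2 + 2 * pc ^ 2) * (3 * pc ^ 2 - 2 * qc ^ 2) = 0 := by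
      rcases mul_eq_zero.mp hR2 with h | h
      · exact absurd h (by simpa using hz0)
      · exact h
    have hzero := cuboid_bezout pc qc s hR hR'
    have hcast : ((2048 * a ^ 18 * q' ^ 18 * (a ^ 2 - q' ^ 2) ^ 12 * (a ^ 2 + q' ^ 2) ^ 4 *
        (a ^ 12 + 15 * a ^ 10 * q' ^ 2 - 1585 * a ^ 8 * q' ^ 4 + 3052 * a ^ 6 * q' ^ 6
          - 1585 * a ^ 4 * q' ^ 8 + 15 * a ^ 2 * q' ^ 10 + q' ^ 12) : ℤ) : ℂ)
        = 2048 * pc ^ 18 * qc ^ 18 * (pc ^ 2 - qc ^ 2) ^ 12 * (pc ^ 2 + qc ^ 2) ^ 4 *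
          (pc ^ 12 + 15 * pc ^ 10 * qc ^ 2 - 1585 * pc ^ 8 * qc ^ 4 + 3052 * pc ^ 6 * qc ^ 6
            - 1585 * pc ^ 4 * qc ^ 8 + 15 * pc ^ 2 * qc ^ 10 + qc ^ 12) := by
      rw [hpc_def, hqc_def, ha_def]
      push_cast
      ring
    rw [hzero] at hcast
    exact hDint (by exact_mod_cast hcast)
  have hnodup : f.roots.Nodup := by
    rw [Multiset.nodup_iff_count_le_one]
    intro z
    by_contra hcount
    push_neg at hcount
    have h2 : 2 ≤ f.rootMultiplicity z := by
      rw [← count_roots]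
      omega
    have hdvd : (X - C z) ^ 2 ∣ f :=
      dvd_trans (pow_dvd_pow _ h2) (f.pow_rootMultiplicity_dvd z)
    obtain ⟨g, hg⟩ := hdvd
    have h0 : f.eval z = 0 := by rw [hg]; simp
    have h1 : f.derivative.eval z = 0 := by
      rw [hg]
      simp [derivative_mul, derivative_pow]
    exact hmult z h0 h1
  -- extract the roots
  set L : List ℂ := f.roots.toList with hL_def
  have hlen : L.length = 10 := by
    rw [hL_def, Multiset.length_toList, hcard]
  have hndL : L.Nodup := by
    have h := Multiset.coe_toList f.roots
    rw [hL_def]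
    exact Multiset.coe_nodup.mp (by rw [h]; exact hnodup)
  refine ⟨fun i => L.get (Fin.cast hlen.symm i), ?_, ?_, ?_⟩
  · intro i j hij
    have h2 := List.nodup_iff_injective_get.mp hndL hij
    have h3 := congrArg Fin.val h2
    simp only [Fin.coe_cast] at h3
    exact Fin.ext h3
  · intro i
    have hmem : L.get (Fin.cast hlen.symm i) ∈ L := L.get_mem _
    have hmr : L.get (Fin.cast hlen.symm i) ∈ f.roots :=
      Multiset.mem_toList.mp hmem
    have := isRoot_of_mem_roots hmr
    rw [IsRoot, hfe] at this
    exact this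
  · intro t ht
    have hmr : t ∈ f.roots := by
      rw [mem_roots hne, IsRoot, hfe]
      exact ht
    have hmem : t ∈ L := Multiset.mem_toList.mpr hmr
    obtain ⟨n, hn⟩ := List.mem_iff_get.mp hmem
    exact ⟨Fin.cast hlen n, hn.symm⟩
end

section
/- Let p̃, q̃ be integers with p̃ ≠ 0 and q̃ ≥ 97·|p̃|. Then the equation Q_{p̃+q̃, q̃}(t) = 0 has exactly one real root t with t > 0, and this root satisfies q̃² + 5·p̃·q̃ + 10·p̃² − 74·|p̃|³/q̃ < t < q̃² + 5·p̃·q̃ + 10·p̃² if p̃ > 0, and q̃² + 5·p̃·q̃ + 10·p̃² < t < q̃² + 5·p̃·q̃ + 10·p̃² + 74·|p̃|³/q̃ if p̃ < 0. -/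
set_option maxHeartbeats 2000000

private lemma qmono (p q t1 t2 : ℝ)
    (hA : 0 ≤ (2*q^2 + p^2) * (3*q^2 - 2*p^2))
    (hB : 0 ≤ q^8 + 10*p^2*q^6 + 4*p^4*q^4 - 14*p^6*q^2 + p^8)
    (hD : 0 ≤ p^6 * q^6 * (q^2 + 2*p^2) * (3*p^2 - 2*q^2))
    (h1 : 0 < t1) (h12 : t1 < t2) :
    cuboidQ p q t1 * t2^4 < cuboidQ p q t2 * t1^4 := by
  have h2 : 0 < t2 := h1.trans h12
  have ht2 : t1^2 < t2^2 := by nlinarith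
  have ht4 : t1^4 < t2^4 := by nlinarith
  have ht6 : t1^6 < t2^6 := by
    nlinarith [mul_lt_mul'' ht2 ht4 (by positivity : (0:ℝ) ≤ t1^2) (by positivity : (0:ℝ) ≤ t1^4)]
  have key : cuboidQ p q t2 * t1^4 - cuboidQ p q t1 * t2^4
      = t1^4*t2^4*(t2^6 - t1^6)
        + ((2*q^2 + p^2) * (3*q^2 - 2*p^2)) * (t1^4*t2^4*(t2^4 - t1^4))
        + (q^8 + 10*p^2*q^6 + 4*p^4*q^4 - 14*p^6*q^2 + p^8) * (t1^4*t2^4*(t2^2 - t1^2))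
        + (p^6 * q^6 * (q^2 + 2*p^2) * (3*p^2 - 2*q^2)) * (t1^2*t2^2*(t2^2 - t1^2))
        + (p^10*q^10) * (t2^4 - t1^4) := by
    unfold cuboidQ; ring
  have T1 : 0 < t1^4*t2^4*(t2^6 - t1^6) := mul_pos (by positivity) (by linarith)
  have T2 : 0 ≤ ((2*q^2 + p^2) * (3*q^2 - 2*p^2)) * (t1^4*t2^4*(t2^4 - t1^4)) :=
    mul_nonneg hA (mul_nonneg (by positivity) (by linarith))
  have T3 : 0 ≤ (q^8 + 10*p^2*q^6 + 4*p^4*q^4 - 14*p^6*q^2 + p^8) * (t1^4*t2^4*(t2^2 - t1^2)) :=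
    mul_nonneg hB (mul_nonneg (by positivity) (by linarith))
  have T4 : 0 ≤ (p^6 * q^6 * (q^2 + 2*p^2) * (3*p^2 - 2*q^2)) * (t1^2*t2^2*(t2^2 - t1^2)) :=
    mul_nonneg hD (mul_nonneg (by positivity) (by linarith))
  have T5 : 0 ≤ (p^10*q^10) * (t2^4 - t1^4) := mul_nonneg (by positivity) (by linarith)
  linarith

private lemma contQ (p q : ℝ) : Continuous fun t : ℝ => cuboidQ p q t := by
  unfold cuboidQ; continuity

private lemma coefA_pos (u m : ℝ) (hu : 1 ≤ u) (hm : 0 ≤ m) :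
    0 ≤ (2*(97*u + m)^2 + (u + (97*u + m))^2) * (3*(97*u + m)^2 - 2*(u + (97*u + m))^2) := by
  have hu0 : 0 < u := by linarith
  have h : (2*(97*u + m)^2 + (u + (97*u + m))^2) * (3*(97*u + m)^2 - 2*(u + (97*u + m))^2) = 3*m^4 + 1154*u*m^3 + 166439*u^2*m^2 + 10667276*u^3*m + 256338018*u^4 := by ring
  rw [h]; positivity

private lemma coefB_pos (u m : ℝ) (hu : 1 ≤ u) (hm : 0 ≤ m) :
    0 ≤ (97*u + m)^8 + 10*(u + (97*u + m))^2*(97*u + m)^6 + 4*(u + (97*u + m))^4*(97*u + m)^4 - 14*(u + (97*u + m))^6*(97*u + m)^2 + (u + (97*u + m))^8 := by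
  have hu0 : 0 < u := by linarith
  have h : (97*u + m)^8 + 10*(u + (97*u + m))^2*(97*u + m)^6 + 4*(u + (97*u + m))^4*(97*u + m)^4 - 14*(u + (97*u + m))^6*(97*u + m)^2 + (u + (97*u + m))^8 = 2*m^8 + 1512*u*m^7 + 499596*u^2*m^6 + 94229472*u^3*m^5 + 11095368144*u^4*m^4 + 835119979788*u^5*m^3 + 39234625410606*u^6*m^2 + 1051822264387488*u^7*m + 12317857720721897*u^8 := by ring
  rw [h]; positivity

private lemma coefD_pos (u m : ℝ) (hu : 1 ≤ u) (hm : 0 ≤ m) :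
    0 ≤ (u + (97*u + m))^6 * (97*u + m)^6 * ((97*u + m)^2 + 2*(u + (97*u + m))^2) * (3*(u + (97*u + m))^2 - 2*(97*u + m)^2) := by
  have hu0 : 0 < u := by linarith
  have h : (u + (97*u + m))^6 * (97*u + m)^6 * ((97*u + m)^2 + 2*(u + (97*u + m))^2) * (3*(u + (97*u + m))^2 - 2*(97*u + m)^2) = 3*m^16 + 4696*u*m^15 + 3445652*u^2*m^14 + 1573096960*u^3*m^13 + 500162829312*u^4*m^12 + 117433093926924*u^5*m^11 + 21061781335033998*u^6*m^10 + 2943442523863478080*u^7*m^9 + 323938036910291072045*u^8*m^8 + 28168172744008523080420*u^9*m^7 + 1928862988843546655548038*u^10*m^6 + 102920063718001333056023736*u^11*m^5 + 4194926605664272495377895752*u^12*m^4 + 126261822160895647239663932800*u^13*m^3 + 2646621441587509315605720746912*u^14*m^2 + 34518558383604105373221201096064*u^15*m + 211032968680257687338630235727488*u^16 := by ring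
  rw [h]; positivity

private lemma certU_pos (u m : ℝ) (hu : 1 ≤ u) (hm : 0 ≤ m) :
    0 < cuboidQ (u + (97*u + m)) (97*u + m) ((97*u + m)^2 + 5*u*(97*u + m) + 10*u^2) := by
  have hu0 : 0 < u := by linarith
  have h : cuboidQ (u + (97*u + m)) (97*u + m) ((97*u + m)^2 + 5*u*(97*u + m) + 10*u^2) = 1216*u^3*m^17 + 2040800*u^4*m^16 + 1611822016*u^5*m^15 + 795650731040*u^6*m^14 + 274937919341536*u^7*m^13 + 70576627124303264*u^8*m^12 + 13936464377498865000*u^9*m^11 + 2162309208263460259044*u^10*m^10 + 266874580406779399900980*u^11*m^9 + 26350902190293819314021924*u^12*m^8 + 2081529937681232452639743904*u^13*m^7 + 130795900876315424681285010620*u^14*m^6 + 6457720019738294178180575928004*u^15*m^5 + 245261805079251707129911085335100*u^16*m^4 + 6919822267719737118460823573912704*u^17*m^3 + 136668060945333403082173146335076480*u^18*m^2 + 1687050958816849460198808586206704640*u^19*m + 9800303347846541523763495713001896960*u^20 := by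
    unfold cuboidQ; ring
  rw [h]; positivity

private lemma certL_pos (u m : ℝ) (hu : 1 ≤ u) (hm : 0 ≤ m) :
    cuboidQ (u + (97*u + m)) (97*u + m) (((97*u + m)^2 + 5*u*(97*u + m) + 10*u^2) - 74*u^3/(97*u + m)) < 0 := by
  have hu0 : 0 < u := by linarith
  have hq : (0:ℝ) < 97*u + m := by linarith
  have hq' : (97*u + m : ℝ) ≠ 0 := ne_of_gt hq
  have h : -(cuboidQ (u + (97*u + m)) (97*u + m) (((97*u + m)^2 + 5*u*(97*u + m) + 10*u^2) - 74*u^3/(97*u + m))) * (97*u + m)^10 = 1152*u^3*m^27 + 3040672*u^4*m^26 + 3864351360*u^5*m^25 + 3148251260992*u^6*m^24 + 1846736798172096*u^7*m^23 + 830534235685125504*u^8*m^22 + 297737822655683382872*u^9*m^21 + 87331441784352264035820*u^10*m^20 + 21346974441515794443267344*u^11*m^19 + 4406395056649624635423511152*u^12*m^18 + 775536529072284456744318340088*u^13*m^17 + 117196629811014711597480675876548*u^14*m^16 + 15279909666657963606864071875889552*u^15*m^15 + 1724034340743494409408902794198155704*u^16*m^14 + 168590622624065549287342541849170234504*u^17*m^13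 + 14288389657649182531070125335222689184020*u^18*m^12 + 1047979029664747690353867592395172496338928*u^19*m^11 + 66315440150581297239124855494436052448219296*u^20*m^10 + 3603053395867606160946246651004227953953065576*u^21*m^9 + 166916161748609853878365807720569764127192228636*u^22*m^8 + 6529912898435526350324324255241733028980707269424*u^23*m^7 + 212885143184663988914074035485641311348586319350424*u^24*m^6 + 5678627018130312484053059362373433828281482360392000*u^25*m^5 + 120743878249772439725152610306453385997519460975226848*u^26*m^4 + 1968356020940855452920179165445025743588507381479857920*u^27*m^3 + 23103875785246409749137006374782109053470350571845123200*u^28*m^2 + 173840745335778172359941205962843152697089492939511168000*u^29*m + 629807788577099129318988093737829364453058769595942080000*u^30 := by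
    unfold cuboidQ; field_simp; ring
  have hpos : (0:ℝ) < 1152*u^3*m^27 + 3040672*u^4*m^26 + 3864351360*u^5*m^25 + 3148251260992*u^6*m^24 + 1846736798172096*u^7*m^23 + 830534235685125504*u^8*m^22 + 297737822655683382872*u^9*m^21 + 87331441784352264035820*u^10*m^20 + 21346974441515794443267344*u^11*m^19 + 4406395056649624635423511152*u^12*m^18 + 775536529072284456744318340088*u^13*m^17 + 117196629811014711597480675876548*u^14*m^16 + 15279909666657963606864071875889552*u^15*m^15 + 1724034340743494409408902794198155704*u^16*m^14 + 168590622624065549287342541849170234504*u^17*m^13 + 14288389657649182531070125335222689184020*u^18*m^12 + 1047979029664747690353867592395172496338928*u^19*m^11 + 66315440150581297239124855494436052448219296*u^20*m^10 + 3603053395867606160946246651004227953953065576*u^21*m^9 + 166916161748609853878365807720569764127192228636*u^22*m^8 + 6529912898435526350324324255241733028980707269424*u^23*m^7 + 212885143184663988914074035485641311348586319350424*u^24*m^6 + 5678627018130312484053059362373433828281482360392000*u^25*m^5 + 120743878249772439725152610306453385997519460975226848*u^26*m^4 + 1968356020940855452920179165445025743588507381479857920*u^27*m^3 + 23103875785246409749137006374782109053470350571845123200*u^28*m^2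 + 173840745335778172359941205962843152697089492939511168000*u^29*m + 629807788577099129318988093737829364453058769595942080000*u^30 := by positivity
  nlinarith [h, hpos, pow_pos hq 10]

private lemma certLo_pos (u m : ℝ) (hu : 1 ≤ u) (hm : 0 ≤ m) :
    (0:ℝ) < (((97*u + m)^2 + 5*u*(97*u + m) + 10*u^2) - 74*u^3/(97*u + m)) := by
  have hu0 : 0 < u := by linarith
  have hq : (0:ℝ) < 97*u + m := by linarith
  have h : ((((97*u + m)^2 + 5*u*(97*u + m) + 10*u^2) - 74*u^3/(97*u + m))) * (97*u + m) = 1*m^3 + 296*u*m^2 + 29207*u^2*m + 960614*u^3 := by field_simp; ring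
  nlinarith [h, (by positivity : (0:ℝ) < 1*m^3 + 296*u*m^2 + 29207*u^2*m + 960614*u^3)]

private lemma main_pos (u m : ℝ) (hu : 1 ≤ u) (hm : 0 ≤ m) :
    (∃! t : ℝ, 0 < t ∧ cuboidQ (u + (97*u + m)) (97*u + m) t = 0) ∧
    ∀ t : ℝ, 0 < t → cuboidQ (u + (97*u + m)) (97*u + m) t = 0 →
      ((((97*u + m)^2 + 5*u*(97*u + m) + 10*u^2) - 74*u^3/(97*u + m)) < t ∧ t < ((97*u + m)^2 + 5*u*(97*u + m) + 10*u^2)) := by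
  have hu0 : 0 < u := by linarith
  have hq : (0:ℝ) < 97*u + m := by linarith
  have hlo : (0:ℝ) < (((97*u + m)^2 + 5*u*(97*u + m) + 10*u^2) - 74*u^3/(97*u + m)) := certLo_pos u m hu hm
  have hlt : ((((97*u + m)^2 + 5*u*(97*u + m) + 10*u^2) - 74*u^3/(97*u + m)) : ℝ) < ((97*u + m)^2 + 5*u*(97*u + m) + 10*u^2) := by
    have : 0 < 74*u^3/(97*u+m) := by positivity
    linarith
  have hQlo : cuboidQ (u + (97*u + m)) (97*u + m) ((((97*u + m)^2 + 5*u*(97*u + m) + 10*u^2) - 74*u^3/(97*u + m))) < 0 := certL_pos u m hu hm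
  have hQhi : 0 < cuboidQ (u + (97*u + m)) (97*u + m) (((97*u + m)^2 + 5*u*(97*u + m) + 10*u^2)) := certU_pos u m hu hm
  have uniq : ∀ t1 t2 : ℝ, 0 < t1 → cuboidQ (u + (97*u + m)) (97*u + m) t1 = 0 →
      0 < t2 → cuboidQ (u + (97*u + m)) (97*u + m) t2 = 0 → t1 = t2 := by
    intro t1 t2 h1 e1 h2 e2
    rcases lt_trichotomy t1 t2 with h | h | h
    · have := qmono (u + (97*u + m)) (97*u + m) t1 t2 (coefA_pos u m hu hm) (coefB_pos u m hu hm)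
        (coefD_pos u m hu hm) h1 h
      rw [e1, e2] at this; simp at this
    · exact h
    · have := qmono (u + (97*u + m)) (97*u + m) t2 t1 (coefA_pos u m hu hm) (coefB_pos u m hu hm)
        (coefD_pos u m hu hm) h2 h
      rw [e1, e2] at this; simp at this
  obtain ⟨t0, ht0mem, ht0⟩ : ∃ t0 ∈ Set.Ioo ((((97*u + m)^2 + 5*u*(97*u + m) + 10*u^2) - 74*u^3/(97*u + m)) : ℝ) (((97*u + m)^2 + 5*u*(97*u + m) + 10*u^2)),
      cuboidQ (u + (97*u + m)) (97*u + m) t0 = 0 := by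
    have := intermediate_value_Ioo (le_of_lt hlt) (contQ (u + (97*u + m)) (97*u + m)).continuousOn
    have h0 : (0:ℝ) ∈ Set.Ioo (cuboidQ (u + (97*u + m)) (97*u + m) ((((97*u + m)^2 + 5*u*(97*u + m) + 10*u^2) - 74*u^3/(97*u + m)))) (cuboidQ (u + (97*u + m)) (97*u + m) (((97*u + m)^2 + 5*u*(97*u + m) + 10*u^2))) :=
      ⟨hQlo, hQhi⟩
    obtain ⟨t0, ht0mem, ht0⟩ := this h0
    exact ⟨t0, ht0mem, ht0⟩
  have ht0pos : 0 < t0 := lt_trans hlo ht0mem.1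
  constructor
  · exact ⟨t0, ⟨ht0pos, ht0⟩, fun y hy => uniq y t0 hy.1 hy.2 ht0pos ht0⟩
  · intro t ht he
    have : t = t0 := uniq t t0 ht he ht0pos ht0
    rw [this]; exact ⟨ht0mem.1, ht0mem.2⟩

private lemma coefA_neg (u m : ℝ) (hu : 1 ≤ u) (hm : 0 ≤ m) :
    0 ≤ (2*(97*u + m)^2 + (-u + (97*u + m))^2) * (3*(97*u + m)^2 - 2*(-u + (97*u + m))^2) := by
  have hu0 : 0 < u := by linarith
  have h : (2*(97*u + m)^2 + (-u + (97*u + m))^2) * (3*(97*u + m)^2 - 2*(-u + (97*u + m))^2) = 3*m^4 + 1174*u*m^3 + 172259*u^2*m^2 + 11231832*u^3*m + 274593030*u^4 := by ring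
  rw [h]; positivity

private lemma coefB_neg (u m : ℝ) (hu : 1 ≤ u) (hm : 0 ≤ m) :
    0 ≤ (97*u + m)^8 + 10*(-u + (97*u + m))^2*(97*u + m)^6 + 4*(-u + (97*u + m))^4*(97*u + m)^4 - 14*(-u + (97*u + m))^6*(97*u + m)^2 + (-u + (97*u + m))^8 := by
  have hu0 : 0 < u := by linarith
  have h : (97*u + m)^8 + 10*(-u + (97*u + m))^2*(97*u + m)^6 + 4*(-u + (97*u + m))^4*(97*u + m)^4 - 14*(-u + (97*u + m))^6*(97*u + m)^2 + (-u + (97*u + m))^8 = 2*m^8 + 1592*u*m^7 + 553916*u^2*m^6 + 110037008*u^3*m^5 + 13651054304*u^4*m^4 + 1083041108084*u^5*m^3 + 53665153778342*u^6*m^2 + 1518470729632904*u^7*m + 18785292863625985*u^8 := by ring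
  rw [h]; positivity

private lemma coefD_neg (u m : ℝ) (hu : 1 ≤ u) (hm : 0 ≤ m) :
    0 ≤ (-u + (97*u + m))^6 * (97*u + m)^6 * ((97*u + m)^2 + 2*(-u + (97*u + m))^2) * (3*(-u + (97*u + m))^2 - 2*(97*u + m)^2) := by
  have hu0 : 0 < u := by linarith
  have h : (-u + (97*u + m))^6 * (97*u + m)^6 * ((97*u + m)^2 + 2*(-u + (97*u + m))^2) * (3*(-u + (97*u + m))^2 - 2*(97*u + m)^2) = 3*m^16 + 4616*u*m^15 + 3329252*u^2*m^14 + 1494060112*u^3*m^13 + 466939958384*u^4*m^12 + 107764780529140*u^5*m^11 + 18998432950062278*u^6*m^10 + 2609841535147357576*u^7*m^9 + 282329286846225691301*u^8*m^8 + 24131677979060183461612*u^9*m^7 + 1624293426479946086841214*u^10*m^6 + 85191597084322914806328192*u^11*m^5 + 3413139027108292225309722624*u^12*m^4 + 100979635753991775189834399744*u^13*m^3 + 2080582262091360950381684195328*u^14*m^2 + 26673263812862612444923048230912*u^15*m + 160288859109474772805523886571520*u^16 := by ring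
  rw [h]; positivity

private lemma certU_neg (u m : ℝ) (hu : 1 ≤ u) (hm : 0 ≤ m) :
    cuboidQ (-u + (97*u + m)) (97*u + m) ((97*u + m)^2 + 5*(-u)*(97*u + m) + 10*(-u)^2) < 0 := by
  have hu0 : 0 < u := by linarith
  have h : -(cuboidQ (-u + (97*u + m)) (97*u + m) ((97*u + m)^2 + 5*(-u)*(97*u + m) + 10*(-u)^2)) = 1216*u^3*m^17 + 1969568*u^4*m^16 + 1501269952*u^5*m^15 + 715213881440*u^6*m^14 + 238517583497056*u^7*m^13 + 59090739248055200*u^8*m^12 + 11261190797521362792*u^9*m^11 + 1686254234628692567820*u^10*m^10 + 200856699202857758257860*u^11*m^9 + 19140298666695222569233524*u^12*m^8 + 1459184440222807950936747168*u^13*m^7 + 88490390476111256531148012612*u^14*m^6 + 4216535163378576781918179356916*u^15*m^5 + 154554268162428504609889971223260*u^16*m^4 + 4208434450788578152431252798719424*u^17*m^3 + 80217130983771719064114168891178464*u^18*m^2 + 955658273844781211429257973193182400*u^19*m + 5357819548098707177296232398911711168*u^20 := by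
    unfold cuboidQ; ring
  nlinarith [h, (by positivity : (0:ℝ) < 1216*u^3*m^17 + 1969568*u^4*m^16 + 1501269952*u^5*m^15 + 715213881440*u^6*m^14 + 238517583497056*u^7*m^13 + 59090739248055200*u^8*m^12 + 11261190797521362792*u^9*m^11 + 1686254234628692567820*u^10*m^10 + 200856699202857758257860*u^11*m^9 + 19140298666695222569233524*u^12*m^8 + 1459184440222807950936747168*u^13*m^7 + 88490390476111256531148012612*u^14*m^6 + 4216535163378576781918179356916*u^15*m^5 + 154554268162428504609889971223260*u^16*m^4 + 4208434450788578152431252798719424*u^17*m^3 + 80217130983771719064114168891178464*u^18*m^2 + 955658273844781211429257973193182400*u^19*m + 5357819548098707177296232398911711168*u^20)]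

private lemma certL_neg (u m : ℝ) (hu : 1 ≤ u) (hm : 0 ≤ m) :
    0 < cuboidQ (-u + (97*u + m)) (97*u + m) (((97*u + m)^2 + 5*(-u)*(97*u + m) + 10*(-u)^2) + 74*u^3/(97*u + m)) := by
  have hu0 : 0 < u := by linarith
  have hq : (0:ℝ) < 97*u + m := by linarith
  have hq' : (97*u + m : ℝ) ≠ 0 := ne_of_gt hq
  have h : cuboidQ (-u + (97*u + m)) (97*u + m) (((97*u + m)^2 + 5*(-u)*(97*u + m) + 10*(-u)^2) + 74*u^3/(97*u + m)) * (97*u + m)^10 = 1152*u^3*m^27 + 2993504*u^4*m^26 + 3745393664*u^5*m^25 + 3004008659008*u^6*m^24 + 1734794613086144*u^7*m^23 + 768090177426603776*u^8*m^22 + 271081972497551621976*u^9*m^21 + 78279774851738666376836*u^10*m^20 + 18837702458316288552927472*u^11*m^19 + 3828142188675035111119544016*u^12*m^18 + 663315704928996137982380835064*u^13*m^17 + 98684037052834203556587595854380*u^14*m^16 + 12666794100364183307415132793611280*u^15*m^15 + 1407039721471161067290806112640158632*u^16*m^14 + 135459281902579297793282983844607186088*u^17*m^13 + 11302485057663352784789376865587488370076*u^18*m^12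 + 816129262059381374683285379198182075301840*u^19*m^11 + 50843696811605606661981122708467652095368032*u^20*m^10 + 2719629108671921507625942537841757660380035624*u^21*m^9 + 124037872935287637527750071060170322054082577780*u^22*m^8 + 4777279748110956351254099504976576125894964696560*u^23*m^7 + 153333284221396384607476034506431647099228813901512*u^24*m^6 + 4026731474584695114334313651725344295488867724770272*u^25*m^5 + 84293315817836456153673755865589909865955159647831296*u^26*m^4 + 1352853661156970962045056090395590433701787618367340544*u^27*m^3 + 15633334840884239635243141185893959937889412772114857984*u^28*m^2 + 115807973968207112780574144440911224063827051932098232320*u^29*m + 413062248136297948842674935061460096739377623154103943168*u^30 := by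
    unfold cuboidQ; field_simp; ring
  have hpos : (0:ℝ) < 1152*u^3*m^27 + 2993504*u^4*m^26 + 3745393664*u^5*m^25 + 3004008659008*u^6*m^24 + 1734794613086144*u^7*m^23 + 768090177426603776*u^8*m^22 + 271081972497551621976*u^9*m^21 + 78279774851738666376836*u^10*m^20 + 18837702458316288552927472*u^11*m^19 + 3828142188675035111119544016*u^12*m^18 + 663315704928996137982380835064*u^13*m^17 + 98684037052834203556587595854380*u^14*m^16 + 12666794100364183307415132793611280*u^15*m^15 + 1407039721471161067290806112640158632*u^16*m^14 + 135459281902579297793282983844607186088*u^17*m^13 + 11302485057663352784789376865587488370076*u^18*m^12 + 816129262059381374683285379198182075301840*u^19*m^11 + 50843696811605606661981122708467652095368032*u^20*m^10 + 2719629108671921507625942537841757660380035624*u^21*m^9 + 124037872935287637527750071060170322054082577780*u^22*m^8 + 4777279748110956351254099504976576125894964696560*u^23*m^7 + 153333284221396384607476034506431647099228813901512*u^24*m^6 + 4026731474584695114334313651725344295488867724770272*u^25*m^5 + 84293315817836456153673755865589909865955159647831296*u^26*m^4 + 1352853661156970962045056090395590433701787618367340544*u^27*m^3 + 15633334840884239635243141185893959937889412772114857984*u^28*m^2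 + 115807973968207112780574144440911224063827051932098232320*u^29*m + 413062248136297948842674935061460096739377623154103943168*u^30 := by positivity
  nlinarith [h, hpos, pow_pos hq 10]

private lemma certLo_neg (u m : ℝ) (hu : 1 ≤ u) (hm : 0 ≤ m) :
    (0:ℝ) < ((97*u + m)^2 + 5*(-u)*(97*u + m) + 10*(-u)^2) := by
  have hu0 : 0 < u := by linarith
  have hq : (0:ℝ) < 97*u + m := by linarith
  have h : (((97*u + m)^2 + 5*(-u)*(97*u + m) + 10*(-u)^2)) = 1*m^2 + 189*u*m + 8934*u^2 := by ring
  rw [h]; positivity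

private lemma main_neg (u m : ℝ) (hu : 1 ≤ u) (hm : 0 ≤ m) :
    (∃! t : ℝ, 0 < t ∧ cuboidQ (-u + (97*u + m)) (97*u + m) t = 0) ∧
    ∀ t : ℝ, 0 < t → cuboidQ (-u + (97*u + m)) (97*u + m) t = 0 →
      (((97*u + m)^2 + 5*(-u)*(97*u + m) + 10*(-u)^2) < t ∧ t < (((97*u + m)^2 + 5*(-u)*(97*u + m) + 10*(-u)^2) + 74*u^3/(97*u + m))) := by
  have hu0 : 0 < u := by linarith
  have hq : (0:ℝ) < 97*u + m := by linarith
  have hlo : (0:ℝ) < ((97*u + m)^2 + 5*(-u)*(97*u + m) + 10*(-u)^2) := certLo_neg u m hu hm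
  have hlt : (((97*u + m)^2 + 5*(-u)*(97*u + m) + 10*(-u)^2) : ℝ) < (((97*u + m)^2 + 5*(-u)*(97*u + m) + 10*(-u)^2) + 74*u^3/(97*u + m)) := by
    have : 0 < 74*u^3/(97*u+m) := by positivity
    linarith
  have hQlo : cuboidQ (-u + (97*u + m)) (97*u + m) (((97*u + m)^2 + 5*(-u)*(97*u + m) + 10*(-u)^2)) < 0 := certU_neg u m hu hm
  have hQhi : 0 < cuboidQ (-u + (97*u + m)) (97*u + m) ((((97*u + m)^2 + 5*(-u)*(97*u + m) + 10*(-u)^2) + 74*u^3/(97*u + m))) := certL_neg u m hu hm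
  have uniq : ∀ t1 t2 : ℝ, 0 < t1 → cuboidQ (-u + (97*u + m)) (97*u + m) t1 = 0 →
      0 < t2 → cuboidQ (-u + (97*u + m)) (97*u + m) t2 = 0 → t1 = t2 := by
    intro t1 t2 h1 e1 h2 e2
    rcases lt_trichotomy t1 t2 with h | h | h
    · have := qmono (-u + (97*u + m)) (97*u + m) t1 t2 (coefA_neg u m hu hm) (coefB_neg u m hu hm)
        (coefD_neg u m hu hm) h1 h
      rw [e1, e2] at this; simp at this
    · exact h
    · have := qmono (-u + (97*u + m)) (97*u + m) t2 t1 (coefA_neg u m hu hm) (coefB_neg u m hu hm)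
        (coefD_neg u m hu hm) h2 h
      rw [e1, e2] at this; simp at this
  obtain ⟨t0, ht0mem, ht0⟩ : ∃ t0 ∈ Set.Ioo (((97*u + m)^2 + 5*(-u)*(97*u + m) + 10*(-u)^2) : ℝ) ((((97*u + m)^2 + 5*(-u)*(97*u + m) + 10*(-u)^2) + 74*u^3/(97*u + m))),
      cuboidQ (-u + (97*u + m)) (97*u + m) t0 = 0 := by
    have := intermediate_value_Ioo (le_of_lt hlt) (contQ (-u + (97*u + m)) (97*u + m)).continuousOn
    have h0 : (0:ℝ) ∈ Set.Ioo (cuboidQ (-u + (97*u + m)) (97*u + m) (((97*u + m)^2 + 5*(-u)*(97*u + m) + 10*(-u)^2))) (cuboidQ (-u + (97*u + m)) (97*u + m) ((((97*u + m)^2 + 5*(-u)*(97*u + m) + 10*(-u)^2) + 74*u^3/(97*u + m)))) :=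
      ⟨hQlo, hQhi⟩
    obtain ⟨t0, ht0mem, ht0⟩ := this h0
    exact ⟨t0, ht0mem, ht0⟩
  have ht0pos : 0 < t0 := lt_trans hlo ht0mem.1
  constructor
  · exact ⟨t0, ⟨ht0pos, ht0⟩, fun y hy => uniq y t0 hy.1 hy.2 ht0pos ht0⟩
  · intro t ht he
    have : t = t0 := uniq t t0 ht he ht0pos ht0
    rw [this]; exact ⟨ht0mem.1, ht0mem.2⟩

/-- For integers `p̃ ≠ 0` and `q̃ ≥ 97|p̃|`, the equation `Q_{p̃+q̃, q̃}(t) = 0` has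
exactly one positive real root, and it lies in the asymptotic interval
`(q̃² + 5p̃q̃ + 10p̃² − 74|p̃|³/q̃, q̃² + 5p̃q̃ + 10p̃²)` when `p̃ > 0`, and in
`(q̃² + 5p̃q̃ + 10p̃², q̃² + 5p̃q̃ + 10p̃² + 74|p̃|³/q̃)` when `p̃ < 0`. -/
theorem stmt_13 (p' q' : ℤ) (hp : p' ≠ 0) (hq : 97 * |p'| ≤ q') :
    (∃! t : ℝ, 0 < t ∧ cuboidQ ((p' : ℝ) + (q' : ℝ)) (q' : ℝ) t = 0) ∧
    (∀ t : ℝ, 0 < t → cuboidQ ((p' : ℝ) + (q' : ℝ)) (q' : ℝ) t = 0 →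
      ((0 < p' →
        (q' : ℝ) ^ 2 + 5 * (p' : ℝ) * (q' : ℝ) + 10 * (p' : ℝ) ^ 2
            - 74 * |(p' : ℝ)| ^ 3 / (q' : ℝ) < t ∧
        t < (q' : ℝ) ^ 2 + 5 * (p' : ℝ) * (q' : ℝ) + 10 * (p' : ℝ) ^ 2) ∧
       (p' < 0 →
        (q' : ℝ) ^ 2 + 5 * (p' : ℝ) * (q' : ℝ) + 10 * (p' : ℝ) ^ 2 < t ∧
        t < (q' : ℝ) ^ 2 + 5 * (p' : ℝ) * (q' : ℝ) + 10 * (p' : ℝ) ^ 2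
            + 74 * |(p' : ℝ)| ^ 3 / (q' : ℝ)))) := by
  rcases hp.lt_or_gt with hneg | hpos
  · -- p' < 0
    obtain ⟨u, hu1, hpe⟩ : ∃ u : ℝ, 1 ≤ u ∧ (p' : ℝ) = -u :=
      ⟨-(p' : ℝ), by exact_mod_cast neg_le_neg (by omega : p' ≤ -1) , by ring⟩
    have habs : |(p' : ℝ)| = u := by
      rw [hpe, abs_neg, abs_of_pos (by linarith)]
    obtain ⟨m, hm0, hqe⟩ : ∃ m : ℝ, 0 ≤ m ∧ (q' : ℝ) = 97*u + m := by
      refine ⟨(q' : ℝ) - 97*u, ?_, by ring⟩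
      have hqr : (97:ℝ) * |(p' : ℝ)| ≤ (q' : ℝ) := by exact_mod_cast hq
      rw [habs] at hqr; linarith
    have H := main_neg u m hu1 hm0
    rw [habs, hpe, hqe]
    refine ⟨H.1, fun t ht he => ⟨fun h => absurd (h.trans hneg) (lt_irrefl _), fun _ => H.2 t ht he⟩⟩
  · -- 0 < p'
    obtain ⟨u, hu1, hpe⟩ : ∃ u : ℝ, 1 ≤ u ∧ (p' : ℝ) = u :=
      ⟨(p' : ℝ), by exact_mod_cast (by omega : (1:ℤ) ≤ p'), rfl⟩
    have habs : |(p' : ℝ)| = u := by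
      rw [hpe, abs_of_pos (by linarith)]
    obtain ⟨m, hm0, hqe⟩ : ∃ m : ℝ, 0 ≤ m ∧ (q' : ℝ) = 97*u + m := by
      refine ⟨(q' : ℝ) - 97*u, ?_, by ring⟩
      have hqr : (97:ℝ) * |(p' : ℝ)| ≤ (q' : ℝ) := by exact_mod_cast hq
      rw [habs] at hqr; linarith
    have H := main_pos u m hu1 hm0
    rw [habs, hpe, hqe]
    refine ⟨H.1, fun t ht he => ⟨fun _ => H.2 t ht he, fun h => absurd (hpos.trans h) (lt_irrefl _)⟩⟩
end

section
/- The quartic equation u⁴ + 8u² − 12·i·u − 4 = 0 over ℂ has a purely imaginary root u = i·y₁ with 0.486 < y₁ < 0.487, and another purely imaginary root u = i·y₂ with −3.440 < y₂ < −3.439. -/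
private lemma quartic_key (y : ℝ) :
    (Complex.I * (y : ℂ)) ^ 4 + 8 * (Complex.I * (y : ℂ)) ^ 2
      - 12 * Complex.I * (Complex.I * (y : ℂ)) - 4
      = ((y ^ 4 - 8 * y ^ 2 + 12 * y - 4 : ℝ) : ℂ) := by
  have h4 : (Complex.I : ℂ) ^ 4 = 1 := by
    rw [show (4 : ℕ) = 2 * 2 from rfl, pow_mul, Complex.I_sq]; ring
  push_cast
  ring_nf
  rw [h4, Complex.I_sq]
  ring

private lemma contOn (a b : ℝ) :
    ContinuousOn (fun y : ℝ => y ^ 4 - 8 * y ^ 2 + 12 * y - 4) (Set.Icc a b) := by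
  fun_prop

private lemma real_root (a b : ℝ) (hab : a ≤ b)
    (ha : a ^ 4 - 8 * a ^ 2 + 12 * a - 4 < 0)
    (hb : 0 < b ^ 4 - 8 * b ^ 2 + 12 * b - 4) :
    ∃ y ∈ Set.Ioo a b, y ^ 4 - 8 * y ^ 2 + 12 * y - 4 = 0 := by
  obtain ⟨y, hy, hy0⟩ := intermediate_value_Ioo hab (contOn a b) (Set.mem_Ioo.2 ⟨ha, hb⟩)
  exact ⟨y, hy, hy0⟩

private lemma real_root' (a b : ℝ) (hab : a ≤ b)
    (ha : 0 < a ^ 4 - 8 * a ^ 2 + 12 * a - 4)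
    (hb : b ^ 4 - 8 * b ^ 2 + 12 * b - 4 < 0) :
    ∃ y ∈ Set.Ioo a b, y ^ 4 - 8 * y ^ 2 + 12 * y - 4 = 0 := by
  obtain ⟨y, hy, hy0⟩ := intermediate_value_Ioo' hab (contOn a b) (Set.mem_Ioo.2 ⟨hb, ha⟩)
  exact ⟨y, hy, hy0⟩

/-- The quartic `u⁴ + 8u² − 12iu − 4 = 0` has a purely imaginary root `i y₁` with
`0.486 < y₁ < 0.487` and another purely imaginary root `i y₂` with
`−3.440 < y₂ < −3.439`. -/
theorem stmt_17 :
    (∃ y₁ : ℝ, (0.486 : ℝ) < y₁ ∧ y₁ < 0.487 ∧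
      (Complex.I * (y₁ : ℂ)) ^ 4 + 8 * (Complex.I * (y₁ : ℂ)) ^ 2
        - 12 * Complex.I * (Complex.I * (y₁ : ℂ)) - 4 = 0) ∧
    (∃ y₂ : ℝ, (-3.440 : ℝ) < y₂ ∧ y₂ < -3.439 ∧
      (Complex.I * (y₂ : ℂ)) ^ 4 + 8 * (Complex.I * (y₂ : ℂ)) ^ 2
        - 12 * Complex.I * (Complex.I * (y₂ : ℂ)) - 4 = 0) := by
  constructor
  · obtain ⟨y, hy, hy0⟩ := real_root 0.486 0.487 (by norm_num) (by norm_num) (by norm_num)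
    exact ⟨y, hy.1, hy.2, by rw [quartic_key, hy0]; norm_num⟩
  · obtain ⟨y, hy, hy0⟩ := real_root' (-3.440) (-3.439) (by norm_num) (by norm_num) (by norm_num)
    exact ⟨y, hy.1, hy.2, by rw [quartic_key, hy0]; norm_num⟩
end

section
/- The polynomial X⁴ + 8·X² − 12·i·X − 4 with coefficients in the ring ℤ[i] of Gaussian integers (where the coefficient of X is −12·i) is irreducible in ℤ[i][X]. In particular, the quartic u⁴ + 8u² − 12·i·u − 4 = 0 has no root of the form a + b·i with a, b rational. -/
open Polynomial

lemma eq_quad_of_natDegree_le_two {F : Type*} [CommRing F] {p : F[X]}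
    (h : p.natDegree ≤ 2) :
    p = C (p.coeff 2) * X ^ 2 + C (p.coeff 1) * X + C (p.coeff 0) := by
  ext n
  rcases n with _ | _ | _ | n
  · simp
  · simp
  · simp [coeff_X_pow]
  · have h3 : p.coeff (n + 3) = 0 := coeff_eq_zero_of_natDegree_lt (by omega)
    simp [coeff_X_pow, h3]

lemma monic_quad_repr {F : Type*} [CommRing F] {p : F[X]} (hm : p.Monic)
    (hd : p.natDegree = 2) :
    p = X ^ 2 + C (p.coeff 1) * X + C (p.coeff 0) := by
  have h2 : p.coeff 2 = 1 := by
    have := hm.coeff_natDegree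
    rwa [hd] at this
  nth_rw 1 [eq_quad_of_natDegree_le_two hd.le]
  rw [h2, C_1, one_mul]

lemma irreducible_quartic {F : Type*} [Field F] {f : F[X]} (hm : f.Monic)
    (hd : f.natDegree = 4) (hroot : ∀ x : F, ¬ f.IsRoot x)
    (hquad : ∀ u v c d : F,
      f ≠ (X ^ 2 + C u * X + C v) * (X ^ 2 + C c * X + C d)) :
    Irreducible f := by
  have hf0 : f ≠ 0 := hm.ne_zero
  have key1 : ∀ g : F[X], g ∣ f → g.natDegree ≠ 1 := by
    intro g hg h1
    have hg0 : g ≠ 0 := by rintro rfl; simp at h1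
    have hlc : g.coeff 1 ≠ 0 := by
      have := mt leadingCoeff_eq_zero.mp hg0
      rwa [leadingCoeff, h1] at this
    have hgr : g.IsRoot (-(g.coeff 0) / g.coeff 1) := by
      have hrepr := eq_X_add_C_of_natDegree_le_one h1.le
      rw [IsRoot, hrepr]
      simp only [eval_add, eval_mul, eval_C, eval_X]
      simp only [coeff_add, coeff_C, coeff_C_mul, coeff_X_zero, coeff_X_one]
      simp
      field_simp
      ring
    exact hroot _ (hgr.dvd hg)
  have key2 : ∀ g : F[X], g ∣ f → g.natDegree ≠ 2 := by
    intro g hg h2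
    obtain ⟨k, hk⟩ := hg
    have hg0 : g ≠ 0 := by rintro rfl; simp at h2
    have hc0 : g.leadingCoeff ≠ 0 := mt leadingCoeff_eq_zero.mp hg0
    set c := g.leadingCoeff with hc
    have hgm : (g * C c⁻¹).Monic := monic_mul_leadingCoeff_inv hg0
    have hck : (C c⁻¹ : F[X]) * C c = 1 := by
      rw [← C_mul, inv_mul_cancel₀ hc0, map_one]
    have hk' : f = (g * C c⁻¹) * (C c * k) := by
      rw [hk, mul_assoc, ← mul_assoc (C c⁻¹), hck, one_mul]
    have hk0 : k ≠ 0 := by rintro rfl; rw [mul_zero] at hk; exact hf0 hk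
    have hCk0 : C c * k ≠ 0 := mul_ne_zero (by simpa using hc0) hk0
    have hdg' : (g * C c⁻¹).natDegree = 2 := by
      rw [natDegree_mul hg0 (by simpa using inv_ne_zero hc0), natDegree_C, add_zero, h2]
    have hdk' : (C c * k).natDegree = 2 := by
      have := natDegree_mul (hgm.ne_zero) hCk0
      rw [← hk', hd, hdg'] at this
      omega
    have hkm : (C c * k).Monic := hgm.of_mul_monic_left (hk' ▸ hm)
    exact hquad _ _ _ _ (by
      rw [hk', monic_quad_repr hgm hdg', monic_quad_repr hkm hdk'])
  constructor
  · intro h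
    have := natDegree_eq_zero_of_isUnit h
    omega
  intro a b hab
  by_contra hcon
  push_neg at hcon
  obtain ⟨hua, hub⟩ := hcon
  have ha0 : a ≠ 0 := by rintro rfl; rw [zero_mul] at hab; exact hf0 hab
  have hb0 : b ≠ 0 := by rintro rfl; rw [mul_zero] at hab; exact hf0 hab
  have hdeg : a.natDegree + b.natDegree = 4 := by
    rw [← natDegree_mul ha0 hb0, ← hab, hd]
  have ha1 : 1 ≤ a.natDegree := by
    rcases Nat.eq_zero_or_pos a.natDegree with h | h
    · exact absurd (eq_C_of_natDegree_eq_zero h ▸ isUnit_C.mpr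
        (isUnit_iff_ne_zero.mpr (fun h0 =>
          ha0 (by rw [eq_C_of_natDegree_eq_zero h, h0, map_zero])))) hua
    · exact h
  have hb1 : 1 ≤ b.natDegree := by
    rcases Nat.eq_zero_or_pos b.natDegree with h | h
    · exact absurd (eq_C_of_natDegree_eq_zero h ▸ isUnit_C.mpr
        (isUnit_iff_ne_zero.mpr (fun h0 =>
          hb0 (by rw [eq_C_of_natDegree_eq_zero h, h0, map_zero])))) hub
    · exact h
  have hadvd : a ∣ f := ⟨b, hab⟩
  have hbdvd : b ∣ f := ⟨a, by rw [hab, mul_comm]⟩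
  have h1 := key1 a hadvd
  have h2 := key2 a hadvd
  have h3 := key1 b hbdvd
  omega

noncomputable def phi5 : GaussianInt →+* ZMod 5 :=
  Zsqrtd.lift ⟨3, by decide⟩

noncomputable def fQuartic : Polynomial GaussianInt :=
  X ^ 4 + C 8 * X ^ 2 - C (12 * Zsqrtd.sqrtd) * X - C 4

lemma fQuartic_eq :
    fQuartic = X ^ 4 + (C 8 * X ^ 2 + C (-(12 * Zsqrtd.sqrtd)) * X + C (-4)) := by
  simp only [fQuartic, map_neg]
  ring

lemma fQuartic_monic : fQuartic.Monic := by
  rw [fQuartic_eq]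
  exact monic_X_pow_add (degree_quadratic_le.trans_lt (by decide))

lemma fQuartic_natDegree : fQuartic.natDegree = 4 := by
  have hlt : (C (8 : GaussianInt) * X ^ 2 + C (-(12 * Zsqrtd.sqrtd)) * X + C (-4)).degree
      < (X ^ 4 : Polynomial GaussianInt).degree := by
    rw [degree_X_pow]
    exact degree_quadratic_le.trans_lt (by decide)
  have hdeg : fQuartic.degree = 4 := by
    rw [fQuartic_eq, add_comm, degree_add_eq_right_of_degree_lt hlt, degree_X_pow]
    rfl
  exact natDegree_eq_of_degree_eq_some hdeg

lemma map_fQuartic :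
    fQuartic.map phi5 = X ^ 4 + C 3 * X ^ 2 - C 1 * X - C 4 := by
  have h8 : phi5 8 = 3 := by decide
  have h12 : phi5 (12 * Zsqrtd.sqrtd) = 1 := by decide
  have h4 : phi5 4 = 4 := by decide
  simp only [fQuartic, Polynomial.map_sub, Polynomial.map_add, Polynomial.map_mul,
    Polynomial.map_pow, Polynomial.map_X, map_C, h8, h12, h4]

lemma zmod5_noroot : ∀ x : ZMod 5, x ^ 4 + 3 * x ^ 2 - 1 * x - 4 ≠ 0 := by decide

lemma zmod5_noquad : ∀ u v c d : ZMod 5,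
    ¬ ∀ x : ZMod 5, x ^ 4 + 3 * x ^ 2 - 1 * x - 4 =
      (x ^ 2 + u * x + v) * (x ^ 2 + c * x + d) := by decide

lemma fQuartic_irreducible : Irreducible fQuartic := by
  haveI : Fact (Nat.Prime 5) := ⟨by norm_num⟩
  apply fQuartic_monic.irreducible_of_irreducible_map phi5
  apply irreducible_quartic (fQuartic_monic.map phi5)
  · rw [fQuartic_monic.natDegree_map, fQuartic_natDegree]
  · intro x hx
    rw [map_fQuartic] at hx
    simp only [IsRoot, eval_sub, eval_add, eval_mul, eval_pow, eval_C, eval_X] at hx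
    exact zmod5_noroot x hx
  · intro u v c d h
    rw [map_fQuartic] at h
    have h5 : ∀ x : ZMod 5,
        x ^ 4 + 3 * x ^ 2 - 1 * x - 4 =
          (x ^ 2 + u * x + v) * (x ^ 2 + c * x + d) := by
      intro x
      have := congrArg (eval x) h
      simpa only [eval_sub, eval_add, eval_mul, eval_pow, eval_C, eval_X] using this
    exact zmod5_noquad u v c d h5

set_option maxHeartbeats 1000000 in
open Polynomial in
/-- The polynomial `X⁴ + 8X² − 12iX − 4` over the Gaussian integers `ℤ[i]` is
irreducible; in particular the quartic `u⁴ + 8u² − 12iu − 4 = 0` has no root of the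
form `a + b·i` with `a`, `b` rational. -/
theorem stmt_19 :
    Irreducible (X ^ 4 + C 8 * X ^ 2 - C (12 * Zsqrtd.sqrtd) * X - C 4 :
      Polynomial GaussianInt) ∧
    (∀ a b : ℚ, ((a : ℂ) + (b : ℂ) * Complex.I) ^ 4
        + 8 * ((a : ℂ) + (b : ℂ) * Complex.I) ^ 2
        - 12 * Complex.I * ((a : ℂ) + (b : ℂ) * Complex.I) - 4 ≠ 0) := by
  refine ⟨fQuartic_irreducible, ?_⟩
  intro a b hz
  have inj : Function.Injective GaussianInt.toComplex := GaussianInt.toComplex_injective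
  set K := FractionRing GaussianInt with hK
  set L : K →+* ℂ := IsFractionRing.lift inj with hL
  have h1 : ∀ x : GaussianInt, L (algebraMap GaussianInt K x) = GaussianInt.toComplex x :=
    fun x => IsFractionRing.lift_algebraMap inj x
  set p : Polynomial K := fQuartic.map (algebraMap GaussianInt K) with hp
  have hirrK : Irreducible p :=
    (fQuartic_monic.irreducible_iff_irreducible_map_fraction_map).mp fQuartic_irreducible
  have hpd : p.natDegree = 4 := by
    rw [hp, fQuartic_monic.natDegree_map, fQuartic_natDegree]
  have hnoroot : ∀ z : K, ¬ p.IsRoot z := by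
    intro z hzr
    obtain ⟨q, hq⟩ := dvd_iff_isRoot.mpr hzr
    rcases hirrK.isUnit_or_isUnit hq with h | h
    · exact not_isUnit_X_sub_C z h
    · have hq0 : q ≠ 0 := h.ne_zero
      have hq1 := natDegree_eq_zero_of_isUnit h
      have hdq : p.natDegree = 1 + q.natDegree := by
        rw [hq, natDegree_mul (X_sub_C_ne_zero z) hq0, natDegree_X_sub_C]
      omega
  have hIC : GaussianInt.toComplex Zsqrtd.sqrtd = Complex.I := by
    have h0 : (Zsqrtd.sqrtd : GaussianInt) = ⟨0, 1⟩ := rfl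
    rw [h0]
    simp [GaussianInt.toComplex_def']
  have hC : GaussianInt.toComplex (12 * Zsqrtd.sqrtd) = 12 * Complex.I := by
    rw [map_mul, hIC, map_ofNat]
  have hI : Complex.I ∈ L.fieldRange := ⟨algebraMap GaussianInt K Zsqrtd.sqrtd, by
    rw [h1, hIC]⟩
  have hz_mem : ((a : ℂ) + (b : ℂ) * Complex.I) ∈ L.fieldRange :=
    add_mem (SubfieldClass.ratCast_mem _ a)
      (mul_mem (SubfieldClass.ratCast_mem _ b) hI)
  obtain ⟨ξ, hξ⟩ := RingHom.mem_fieldRange.mp hz_mem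
  apply hnoroot ξ
  have hL0 : L (p.eval ξ) = 0 := by
    rw [hp, eval_map, hom_eval₂]
    simp only [fQuartic, eval₂_sub, eval₂_add, eval₂_mul, eval₂_pow, eval₂_C, eval₂_X,
      RingHom.comp_apply]
    rw [h1, h1, h1, hξ, hC, map_ofNat, map_ofNat]
    linear_combination hz
  have h0 : p.eval ξ = 0 := L.injective (by rw [hL0, map_zero])
  exact h0
end
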